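/- arXiv:2312.16355 — 8 statements merged into one kernel-verified Lean document; each statement's English description precedes it below -/
import Mathlib

section
/- Let d ≥ 1 and ℓ ≥ 1, and let γ : Fin d × Fin ℓ ≃ Fin (d·ℓ) be a bijection such that for each i : Fin d the map j ↦ γ(i, j) is strictly monotone. Define the curve value of a grid point p : Fin d → ℕ (with p i < 2^ℓ for all i) by F_γ(p) = Σ_{i : Fin d} Σ_{j : Fin ℓ} (the j-th bit of p i, as 0 or 1) · 2^{γ(i,j)}. Then F_γ is monotone: for all grid points p and q, if p i ≤ q i for every i : Fin d, then F_γ(p) ≤ F_γ(q). -/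
/-!
Reading a number `a < 2 ^ ℓ` as the set of its one bits, the order on numbers is the colex order
on these sets. The curve value of a coordinate moves bit `j` to position `γ (i, j)`; a strictly
monotone relabelling of positions preserves the colex order, hence also the order of the numbers.
-/

open Finset Colex

def lowBits (ℓ a : ℕ) : Finset (Fin ℓ) := {j | a.testBit j}

def spreadBits {ℓ : ℕ} (e : Fin ℓ → ℕ) (a : ℕ) : ℕ :=
  ∑ j : Fin ℓ, (if a.testBit j then 1 else 0) * 2 ^ e j

variable {ℓ a b : ℕ}

lemma image_val_lowBits (ha : a < 2 ^ ℓ) :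
    (lowBits ℓ a).image Fin.val = a.bitIndices.toFinset := by
  ext i
  simp only [lowBits, mem_image, mem_filter, mem_univ, true_and, List.mem_toFinset,
    Nat.mem_bitIndices]
  refine ⟨fun ⟨j, hj, hji⟩ => hji ▸ hj, fun hi => ⟨⟨i, ?_⟩, hi, rfl⟩⟩
  exact (Nat.pow_lt_pow_iff_right one_lt_two).1 ((Nat.two_pow_le_of_mem_bitIndices
    (Nat.mem_bitIndices.2 hi)).trans_lt ha)

lemma toColex_lowBits_le_toColex_lowBits (hab : a ≤ b) (hb : b < 2 ^ ℓ) :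
    toColex (lowBits ℓ a) ≤ toColex (lowBits ℓ b) := by
  rw [← toColex_image_le_toColex_image Fin.val_strictMono, image_val_lowBits (hab.trans_lt hb),
    image_val_lowBits hb, ← geomSum_le_geomSum_iff_toColex_le_toColex le_rfl]
  simpa using hab

lemma spreadBits_eq_sum_image {e : Fin ℓ → ℕ} (he : e.Injective) (a : ℕ) :
    spreadBits e a = ∑ k ∈ (lowBits ℓ a).image e, 2 ^ k := by
  rw [sum_image he.injOn, lowBits, sum_filter]
  simp only [spreadBits, boole_mul]

lemma spreadBits_le_spreadBits {e : Fin ℓ → ℕ} (he : StrictMono e) (hab : a ≤ b)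
    (hb : b < 2 ^ ℓ) : spreadBits e a ≤ spreadBits e b := by
  rw [spreadBits_eq_sum_image he.injective, spreadBits_eq_sum_image he.injective,
    geomSum_le_geomSum_iff_toColex_le_toColex le_rfl, toColex_image_le_toColex_image he]
  exact toColex_lowBits_le_toColex_lowBits hab hb

theorem bmc_monotone_general (d ℓ : ℕ)
    (γ : Fin d × Fin ℓ ≃ Fin (d * ℓ))
    (hγ : ∀ i : Fin d, StrictMono fun j : Fin ℓ => γ (i, j))
    (p q : Fin d → ℕ) (hq : ∀ i, q i < 2 ^ ℓ)
    (hpq : ∀ i, p i ≤ q i) :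
    (∑ i : Fin d, ∑ j : Fin ℓ,
        (if Nat.testBit (p i) j then 1 else 0) * 2 ^ (γ (i, j) : ℕ)) ≤
      ∑ i : Fin d, ∑ j : Fin ℓ,
        (if Nat.testBit (q i) j then 1 else 0) * 2 ^ (γ (i, j) : ℕ) :=
  sum_le_sum fun i _ => spreadBits_le_spreadBits (Fin.val_strictMono.comp (hγ i)) (hpq i) (hq i)

/-- Theorem 1 (Monotonicity) of the paper: the bit-merging curve value function
is monotone with respect to the coordinatewise order on grid points. -/
theorem bmc_monotone (d ℓ : ℕ) (hd : 1 ≤ d) (hl : 1 ≤ ℓ)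
    (γ : Fin d × Fin ℓ ≃ Fin (d * ℓ))
    (hγ : ∀ i : Fin d, StrictMono fun j : Fin ℓ => γ (i, j))
    (p q : Fin d → ℕ) (hp : ∀ i, p i < 2 ^ ℓ) (hq : ∀ i, q i < 2 ^ ℓ)
    (hpq : ∀ i, p i ≤ q i) :
    (∑ i : Fin d, ∑ j : Fin ℓ,
        (if Nat.testBit (p i) j then 1 else 0) * 2 ^ (γ (i, j) : ℕ)) ≤
      ∑ i : Fin d, ∑ j : Fin ℓ,
        (if Nat.testBit (q i) j then 1 else 0) * 2 ^ (γ (i, j) : ℕ) :=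
  bmc_monotone_general d ℓ γ hγ p q hq hpq
end

section
/- Let ℓ ≥ 1 and let s : Fin ℓ → ℕ be strictly monotone. For all natural numbers a and b with a ≤ b and b < 2^ℓ, the bit-spread sums satisfy Σ_{j : Fin ℓ} (the j-th bit of a, as 0 or 1) · 2^{s(j)} ≤ Σ_{j : Fin ℓ} (the j-th bit of b, as 0 or 1) · 2^{s(j)}. -/
private lemma sum_pow_Iio_lt {ℓ : ℕ} (s : Fin ℓ → ℕ) (hs : StrictMono s) (i : Fin ℓ) :
    (∑ j ∈ Finset.Iio i, 2 ^ s j) < 2 ^ s i := by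
  have hinj : Set.InjOn s (Finset.Iio i) := fun x _ y _ h => hs.injective h
  calc (∑ j ∈ Finset.Iio i, 2 ^ s j)
      = ∑ t ∈ (Finset.Iio i).image s, 2 ^ t := (Finset.sum_image (fun x hx y hy h => hinj hx hy h)).symm
    _ ≤ ∑ t ∈ Finset.range (s i), 2 ^ t := by
        apply Finset.sum_le_sum_of_subset
        intro t ht
        simp only [Finset.mem_image, Finset.mem_Iio] at ht
        obtain ⟨j, hj, rfl⟩ := ht
        exact Finset.mem_range.2 (hs hj)
    _ < 2 ^ s i := by
        have h : ∀ n, (∑ t ∈ Finset.range n, 2 ^ t) + 1 = 2 ^ n := by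
          intro n
          induction n with
          | zero => simp
          | succ n ih => rw [Finset.sum_range_succ, pow_succ]; omega
        have := h (s i)
        omega

/-- The one-dimensional lemma underlying Theorem 1 of the paper: spreading the
bits of an `ℓ`-bit number to higher, order-preserving positions preserves the
numeric order of `ℓ`-bit numbers. -/
theorem bit_spread_monotone (ℓ : ℕ) (hl : 1 ≤ ℓ) (s : Fin ℓ → ℕ)
    (hs : StrictMono s) (a b : ℕ) (hab : a ≤ b) (hb : b < 2 ^ ℓ) :
    (∑ j : Fin ℓ, (if Nat.testBit a j then 1 else 0) * 2 ^ s j) ≤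
      ∑ j : Fin ℓ, (if Nat.testBit b j then 1 else 0) * 2 ^ s j := by
  rcases eq_or_lt_of_le hab with rfl | hlt
  · exact le_rfl
  · have ha : a < 2 ^ ℓ := lt_of_lt_of_le hlt hb.le
    -- set of differing bit positions
    have hne : a ≠ b := hlt.ne
    set S : Finset ℕ := (Finset.range ℓ).filter (fun j => Nat.testBit a j ≠ Nat.testBit b j) with hS
    have hSne : S.Nonempty := by
      by_contra h
      apply hne
      apply Nat.eq_of_testBit_eq
      intro j
      by_cases hj : j < ℓ
      · by_contra hd
        exact h ⟨j, Finset.mem_filter.2 ⟨Finset.mem_range.2 hj, hd⟩⟩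
      · push_neg at hj
        rw [Nat.testBit_lt_two_pow (lt_of_lt_of_le ha (Nat.pow_le_pow_right (by norm_num) hj)),
          Nat.testBit_lt_two_pow (lt_of_lt_of_le hb (Nat.pow_le_pow_right (by norm_num) hj))]
    obtain ⟨i, hiS, himax⟩ := S.exists_max_image id hSne
    have hiℓ : i < ℓ := Finset.mem_range.1 (Finset.mem_filter.1 hiS).1
    have hidiff : Nat.testBit a i ≠ Nat.testBit b i := (Finset.mem_filter.1 hiS).2
    have hagree : ∀ j, i < j → Nat.testBit a j = Nat.testBit b j := by
      intro j hj
      by_contra hd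
      by_cases hjl : j < ℓ
      · exact absurd (himax j (Finset.mem_filter.2 ⟨Finset.mem_range.2 hjl, hd⟩)) (by simpa using hj.not_ge)
      · push_neg at hjl
        exact hd (by rw [Nat.testBit_lt_two_pow (lt_of_lt_of_le ha (Nat.pow_le_pow_right (by norm_num) hjl)),
          Nat.testBit_lt_two_pow (lt_of_lt_of_le hb (Nat.pow_le_pow_right (by norm_num) hjl))])
    have hbi : Nat.testBit b i = true := by
      by_contra h
      have hbf : Nat.testBit b i = false := by simpa using h
      have haf : Nat.testBit a i = true := by
        cases h' : Nat.testBit a i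
        · exact absurd (h'.trans hbf.symm) hidiff
        · rfl
      exact absurd (Nat.lt_of_testBit i hbf haf (fun j hj => (hagree j hj).symm)) hlt.asymm
    have hai : Nat.testBit a i = false := by
      cases h' : Nat.testBit a i
      · rfl
      · exact absurd (h'.trans hbi.symm) hidiff
    set I : Fin ℓ := ⟨i, hiℓ⟩ with hI
    -- split sums at I
    have split : ∀ c : ℕ, (∑ j : Fin ℓ, (if Nat.testBit c j then 1 else 0) * 2 ^ s j)
        = (∑ j ∈ Finset.Iio I, (if Nat.testBit c j then 1 else 0) * 2 ^ s j)
          + ((if Nat.testBit c I then 1 else 0) * 2 ^ s I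
          + ∑ j ∈ Finset.Ioi I, (if Nat.testBit c j then 1 else 0) * 2 ^ s j) := by
      intro c
      rw [← Finset.sum_filter_add_sum_filter_not Finset.univ (fun j => j < I)]
      congr 1
      · apply Finset.sum_congr _ (fun _ _ => rfl)
        ext j; simp
      · rw [show Finset.univ.filter (fun j => ¬ j < I) = Finset.Ici I by ext j; simp [not_lt],
          Finset.Ici_eq_cons_Ioi, Finset.sum_cons]
    rw [split a, split b]
    have heq : (∑ j ∈ Finset.Ioi I, (if Nat.testBit a j then 1 else 0) * 2 ^ s j)
        = ∑ j ∈ Finset.Ioi I, (if Nat.testBit b j then 1 else 0) * 2 ^ s j := by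
      apply Finset.sum_congr rfl
      intro j hj
      have hIj' : I < j := Finset.mem_Ioi.mp hj
      have hIj : i < (j : ℕ) := hIj'
      rw [hagree _ hIj]
    have hIa : Nat.testBit a (I : ℕ) = false := hai
    have hIb : Nat.testBit b (I : ℕ) = true := hbi
    rw [heq, hIa, hIb]
    simp only [Bool.false_eq_true, if_false, if_true, zero_mul, one_mul, zero_add]
    have h1 : (∑ j ∈ Finset.Iio I, (if Nat.testBit a j then 1 else 0) * 2 ^ s j)
        ≤ ∑ j ∈ Finset.Iio I, 2 ^ s j := by
      apply Finset.sum_le_sum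
      intro j _
      split <;> simp
    have h2 := sum_pow_Iio_lt s hs I
    omega
end

section
/- Let d ≥ 1, ℓ ≥ 1, and let γ : Fin d × Fin ℓ ≃ Fin (d·ℓ) be a bijection such that for each i the map j ↦ γ(i, j) is strictly monotone, with curve value F_γ as defined. Let p_s and p_e be grid points with p_s i ≤ p_e i for all i. Then for every grid point p satisfying p_s i ≤ p i ≤ p_e i for all i : Fin d, we have F_γ(p_s) ≤ F_γ(p) ≤ F_γ(p_e). -/
lemma two_pow_sum_range (n : ℕ) : ∑ i ∈ Finset.range n, 2 ^ i = 2 ^ n - 1 := by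
  induction n with
  | zero => simp
  | succ n ih => rw [Finset.sum_range_succ, ih]; have := Nat.one_le_two_pow (n := n); omega

lemma bit_sum_mono (ℓ : ℕ) (w : Fin ℓ → ℕ) (hw : StrictMono w)
    (a b : ℕ) (ha : a < 2 ^ ℓ) (hb : b < 2 ^ ℓ) (hab : a ≤ b) :
    ∑ j : Fin ℓ, (if Nat.testBit a j then 1 else 0) * 2 ^ (w j) ≤
      ∑ j : Fin ℓ, (if Nat.testBit b j then 1 else 0) * 2 ^ (w j) := by
  rcases eq_or_lt_of_le hab with rfl | hlt
  · exact le_rfl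
  set S : Finset (Fin ℓ) := Finset.univ.filter (fun j => a.testBit j ≠ b.testBit j) with hS
  have hhigh : ∀ m : ℕ, ℓ ≤ m → a.testBit m = false ∧ b.testBit m = false := by
    intro m hm
    constructor <;> exact Nat.testBit_eq_false_of_lt (lt_of_lt_of_le (by assumption)
      (Nat.pow_le_pow_right (by norm_num) hm))
  have hne : S.Nonempty := by
    by_contra h
    rw [Finset.not_nonempty_iff_eq_empty] at h
    have : a = b := by
      apply Nat.eq_of_testBit_eq
      intro m
      by_cases hm : m < ℓ
      · by_contra hc
        have : (⟨m, hm⟩ : Fin ℓ) ∈ S := by simp [hS, hc]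
        simp [h] at this
      · obtain ⟨h1, h2⟩ := hhigh m (le_of_not_gt hm); rw [h1, h2]
    omega
  set k := S.max' hne with hk
  have hkS : k ∈ S := S.max'_mem hne
  have hkd : a.testBit k ≠ b.testBit k := by simpa [hS] using hkS
  have heq : ∀ m : ℕ, (k : ℕ) < m → a.testBit m = b.testBit m := by
    intro m hm
    by_cases hmℓ : m < ℓ
    · by_contra hc
      have hmem : (⟨m, hmℓ⟩ : Fin ℓ) ∈ S := by simp [hS, hc]
      have h2 : ((⟨m, hmℓ⟩ : Fin ℓ) : ℕ) ≤ (k : ℕ) := S.le_max' _ hmem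
      simp only at h2; omega
    · obtain ⟨h1, h2⟩ := hhigh m (le_of_not_gt hmℓ); rw [h1, h2]
  have hbk : b.testBit k = true := by
    by_contra hc
    have hak : a.testBit k = true := by
      cases h : a.testBit (k : ℕ) <;> simp_all
    have : b < a := Nat.lt_of_testBit k (by simpa using hc) hak
      (fun j hj => (heq j hj).symm)
    omega
  have hak : a.testBit k = false := by cases h : a.testBit (k : ℕ) <;> simp_all
  -- split sums at k
  have split : ∀ c : ℕ,
      ∑ j : Fin ℓ, (if Nat.testBit c j then 1 else 0) * 2 ^ (w j) =
      (∑ j ∈ Finset.univ.filter (fun j : Fin ℓ => j < k),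
        (if Nat.testBit c j then 1 else 0) * 2 ^ (w j)) +
      ((if Nat.testBit c k then 1 else 0) * 2 ^ (w k) +
       ∑ j ∈ Finset.univ.filter (fun j : Fin ℓ => k < j),
        (if Nat.testBit c j then 1 else 0) * 2 ^ (w j)) := by
    intro c
    rw [← Finset.sum_filter_add_sum_filter_not Finset.univ (fun j : Fin ℓ => j < k)]
    congr 1
    have : Finset.univ.filter (fun j : Fin ℓ => ¬ j < k) =
        insert k (Finset.univ.filter (fun j : Fin ℓ => k < j)) := by
      ext j
      simp only [Finset.mem_insert, Finset.mem_filter, Finset.mem_univ, true_and, not_lt]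
      constructor
      · intro h; rcases eq_or_lt_of_le h with h | h
        · left; exact h.symm
        · right; exact h
      · rintro (rfl | h)
        exacts [le_rfl, h.le]
    rw [this, Finset.sum_insert (by simp)]
  rw [split a, split b, hak, hbk]
  have hT : ∀ j ∈ Finset.univ.filter (fun j : Fin ℓ => k < j),
      (if Nat.testBit a j then 1 else 0) * 2 ^ (w j) =
      (if Nat.testBit b j then 1 else 0) * 2 ^ (w j) := by
    intro j hj
    rw [heq j (by simpa using hj)]
  rw [Finset.sum_congr rfl hT]
  have hA : (∑ j ∈ Finset.univ.filter (fun j : Fin ℓ => j < k),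
      (if Nat.testBit a j then 1 else 0) * 2 ^ (w j)) ≤ 2 ^ (w k) := by
    calc _ ≤ ∑ j ∈ Finset.univ.filter (fun j : Fin ℓ => j < k), 2 ^ (w j) := by
            apply Finset.sum_le_sum; intro j _; split <;> simp
      _ = ∑ m ∈ (Finset.univ.filter (fun j : Fin ℓ => j < k)).image w, 2 ^ m := by
            rw [Finset.sum_image (fun x _ y _ h => hw.injective h)]
      _ ≤ ∑ m ∈ Finset.range (w k), 2 ^ m := by
            apply Finset.sum_le_sum_of_subset
            intro m hm
            simp only [Finset.mem_image, Finset.mem_filter, Finset.mem_univ, true_and] at hm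
            obtain ⟨j, hj, rfl⟩ := hm
            simpa using hw hj
      _ = 2 ^ (w k) - 1 := two_pow_sum_range _
      _ ≤ 2 ^ (w k) := Nat.sub_le _ _
  simp only [Bool.false_eq_true, if_false, if_true, one_mul, zero_mul, zero_add]
  omega

/-- Corollary 1 of the paper: any range query with corners `p_s ≤ p_e` is
bounded by the curve value range `[F_γ(p_s), F_γ(p_e)]`. -/
theorem bmc_range_query_bounded (d ℓ : ℕ) (hd : 1 ≤ d) (hl : 1 ≤ ℓ)
    (γ : Fin d × Fin ℓ ≃ Fin (d * ℓ))
    (hγ : ∀ i : Fin d, StrictMono fun j : Fin ℓ => γ (i, j))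
    (ps pe : Fin d → ℕ) (hps : ∀ i, ps i < 2 ^ ℓ) (hpe : ∀ i, pe i < 2 ^ ℓ)
    (hse : ∀ i, ps i ≤ pe i)
    (p : Fin d → ℕ) (hp : ∀ i, p i < 2 ^ ℓ)
    (hlb : ∀ i, ps i ≤ p i) (hub : ∀ i, p i ≤ pe i) :
    (∑ i : Fin d, ∑ j : Fin ℓ,
        (if Nat.testBit (ps i) j then 1 else 0) * 2 ^ (γ (i, j) : ℕ)) ≤
      (∑ i : Fin d, ∑ j : Fin ℓ,
        (if Nat.testBit (p i) j then 1 else 0) * 2 ^ (γ (i, j) : ℕ)) ∧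
    (∑ i : Fin d, ∑ j : Fin ℓ,
        (if Nat.testBit (p i) j then 1 else 0) * 2 ^ (γ (i, j) : ℕ)) ≤
      ∑ i : Fin d, ∑ j : Fin ℓ,
        (if Nat.testBit (pe i) j then 1 else 0) * 2 ^ (γ (i, j) : ℕ) := by
  have hwi : ∀ i : Fin d, StrictMono fun j : Fin ℓ => ((γ (i, j) : ℕ)) :=
    fun i x y h => hγ i h
  constructor
  · exact Finset.sum_le_sum fun i _ =>
      bit_sum_mono ℓ _ (hwi i) (ps i) (p i) (hps i) (hp i) (hlb i)
  · exact Finset.sum_le_sum fun i _ =>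
      bit_sum_mono ℓ _ (hwi i) (p i) (pe i) (hp i) (hpe i) (hub i)
end

section
/- Let S be a finite set of natural numbers (a Finset ℕ). Then |S| equals the number of elements x ∈ S with x + 1 ∈ S plus the number of elements x ∈ S that have no predecessor in S, i.e. S.card = (S.filter (fun x => x + 1 ∈ S)).card + (S.filter (fun x => ∀ y ∈ S, y + 1 ≠ x)).card. -/
/-- Abstract form of Equation 3 of the paper: for a finite set `S` of natural
numbers, the number of directed edges (elements `x ∈ S` with `x + 1 ∈ S`) plus
the number of section starts (elements of `S` with no predecessor in `S`)
equals the number of elements of `S`. -/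
theorem edges_plus_sections_eq_card (S : Finset ℕ) :
    S.card = (S.filter (fun x => x + 1 ∈ S)).card +
      (S.filter (fun x => ∀ y ∈ S, y + 1 ≠ x)).card := by
  classical
  have key : (S.filter (fun x => x + 1 ∈ S)).card
      = (S.filter (fun x => ¬ ∀ y ∈ S, y + 1 ≠ x)).card := by
    apply Finset.card_bij (fun x _ => x + 1)
    · intro a ha
      simp only [Finset.mem_filter, not_forall] at ha ⊢
      exact ⟨ha.2, a, ha.1, fun h => h rfl⟩
    · intro a ha b hb h
      omega
    · intro b hb
      simp only [Finset.mem_filter, not_forall, not_not] at hb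
      obtain ⟨hbS, y, hyS, hy⟩ := hb
      have hy' : y + 1 = b := by tauto
      exact ⟨y, Finset.mem_filter.2 ⟨hyS, by rwa [hy']⟩, hy'⟩
  have h2 := Finset.card_filter_add_card_filter_not
    (s := S) (p := fun x => ∀ y ∈ S, y + 1 ≠ x)
  rw [key, Nat.add_comm]
  convert h2.symm using 3
end

section
/- Let k ≥ 1 and let s, e be natural numbers with s ≤ e. Then the number of natural numbers a such that s ≤ a·2^k + (2^{k−1} − 1) and a·2^k + 2^{k−1} ≤ e equals max(0, ⌊(e − 2^{k−1}) / 2^k⌋ − ⌈(s − (2^{k−1} − 1)) / 2^k⌉ + 1), where the floor and ceiling divisions are computed over the integers (with s and e regarded as integers). -/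
/-- The paper's closed-form counting formula for the number of occurrences of
the rise pattern `R^k` in a coordinate interval `[s, e]`: the number of `a ∈ ℕ`
with `s ≤ a·2^k + (2^(k−1) − 1)` and `a·2^k + 2^(k−1) ≤ e` equals
`max(0, ⌊(e − 2^(k−1))/2^k⌋ − ⌈(s − (2^(k−1) − 1))/2^k⌉ + 1)`, the divisions
being integer floor and ceiling divisions. -/
theorem rise_pattern_count (k s e : ℕ) (hk : 1 ≤ k) (hse : s ≤ e) :
    ({a : ℕ | s ≤ a * 2 ^ k + (2 ^ (k - 1) - 1) ∧
        a * 2 ^ k + 2 ^ (k - 1) ≤ e}.ncard : ℤ) =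
      max 0 (⌊(((e : ℚ) - 2 ^ (k - 1)) / 2 ^ k : ℚ)⌋ -
        ⌈(((s : ℚ) - (2 ^ (k - 1) - 1)) / 2 ^ k : ℚ)⌉ + 1) := by
  have hB1 : (1:ℕ) ≤ 2 ^ (k-1) := Nat.one_le_two_pow
  have hP0 : (0:ℚ) < (2:ℚ) ^ k := by positivity
  have hPB : (2:ℚ) ^ (k-1) ≤ (2:ℚ) ^ k := by
    apply pow_le_pow_right₀ (by norm_num); omega
  set L : ℤ := ⌈(((s : ℚ) - (2 ^ (k - 1) - 1)) / 2 ^ k : ℚ)⌉ with hL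
  set U : ℤ := ⌊(((e : ℚ) - 2 ^ (k - 1)) / 2 ^ k : ℚ)⌋ with hU
  have hmem : ∀ a : ℕ, (s ≤ a * 2 ^ k + (2 ^ (k - 1) - 1) ∧
      a * 2 ^ k + 2 ^ (k - 1) ≤ e) ↔ (L ≤ (a:ℤ) ∧ (a:ℤ) ≤ U) := by
    intro a
    have h1 : L ≤ (a:ℤ) ↔ s ≤ a * 2 ^ k + (2 ^ (k - 1) - 1) := by
      rw [hL, Int.ceil_le, div_le_iff₀ hP0]
      rw [show (((a:ℤ):ℚ)) = (a:ℚ) by push_cast; ring]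
      rw [← Nat.cast_le (α := ℚ)]
      push_cast [Nat.cast_sub hB1]
      constructor <;> intro h <;> linarith
    have h2 : (a:ℤ) ≤ U ↔ a * 2 ^ k + 2 ^ (k - 1) ≤ e := by
      rw [hU, Int.le_floor, le_div_iff₀ hP0]
      rw [show (((a:ℤ):ℚ)) = (a:ℚ) by push_cast; ring]
      rw [← Nat.cast_le (α := ℚ)]
      push_cast
      constructor <;> intro h <;> linarith
    rw [h1, h2]
  have hL0 : 0 ≤ L := by
    have : (-1:ℤ) < L := by
      rw [hL, Int.lt_ceil]
      rw [show (((-1:ℤ)):ℚ) = -1 by norm_num]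
      rw [lt_div_iff₀ hP0]
      have : (0:ℚ) ≤ (s:ℚ) := by positivity
      nlinarith
    omega
  by_cases hLU : L ≤ U
  · have hU0 : 0 ≤ U := le_trans hL0 hLU
    have hset : {a : ℕ | s ≤ a * 2 ^ k + (2 ^ (k - 1) - 1) ∧
        a * 2 ^ k + 2 ^ (k - 1) ≤ e} = Set.Icc L.toNat U.toNat := by
      ext a
      rw [Set.mem_Icc, Set.mem_setOf_eq, hmem a]
      constructor
      · rintro ⟨h1, h2⟩
        exact ⟨Int.toNat_le.mpr h1, by omega⟩
      · rintro ⟨h1, h2⟩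
        constructor
        · exact Int.toNat_le.mp h1
        · omega
    rw [hset, ← Finset.coe_Icc, Set.ncard_coe_finset, Nat.card_Icc]
    have h1 : L.toNat ≤ U.toNat := by omega
    have h2 : ((U.toNat + 1 - L.toNat : ℕ) : ℤ) = U - L + 1 := by omega
    rw [h2]
    omega
  · have hset : {a : ℕ | s ≤ a * 2 ^ k + (2 ^ (k - 1) - 1) ∧
        a * 2 ^ k + 2 ^ (k - 1) ≤ e} = ∅ := by
      ext a
      simp only [Set.mem_setOf_eq, Set.mem_empty_iff_false, iff_false]
      rintro h
      have := (hmem a).mp h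
      omega
    rw [hset, Set.ncard_empty]
    omega
end

section
/- Let d ≥ 1, ℓ ≥ 1, and let γ : Fin d × Fin ℓ ≃ Fin (d·ℓ) be a bijection such that for each i the map j ↦ γ(i, j) is strictly monotone, with curve value F_γ as defined. For grid points p and q, F_γ(q) = F_γ(p) + 1 if and only if there exist b : Fin d and i : Fin ℓ such that: (1) p b mod 2^{i+1} = 2^i − 1 and q b = p b + 1; and (2) for every dimension i' ≠ b, setting k = |{ j : Fin ℓ | γ(i', j) < γ(b, i) }|, it holds that p i' mod 2^k = 2^k − 1 and q i' = p i' − (2^k − 1). -/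
namespace BMCAux

lemma testBit_div_two_pow (x i j : ℕ) : (x / 2^i).testBit j = x.testBit (i + j) := by
  simp [Nat.testBit_eq_decide_div_mod_eq, Nat.div_div_eq_div_mul, pow_add]

lemma mod_pred_iff (n k : ℕ) :
    n % 2 ^ k = 2 ^ k - 1 ↔ ∀ t, t < k → n.testBit t = true := by
  constructor
  · intro h t ht
    have := congrArg (fun m => m.testBit t) h
    simpa [Nat.testBit_mod_two_pow, Nat.testBit_two_pow_sub_one, ht] using this
  · intro h
    apply Nat.eq_of_testBit_eq
    intro j
    rcases lt_or_ge j k with hj | hj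
    · simp [Nat.testBit_mod_two_pow, Nat.testBit_two_pow_sub_one, hj, h j hj]
    · simp [Nat.testBit_mod_two_pow, Nat.testBit_two_pow_sub_one, Nat.not_lt.2 hj,
        Nat.lt_irrefl]

lemma mod_succ_iff (n i : ℕ) :
    n % 2 ^ (i + 1) = 2 ^ i - 1 ↔
      ((∀ t, t < i → n.testBit t = true) ∧ n.testBit i = false) := by
  constructor
  · intro h
    constructor
    · intro t ht
      have := congrArg (fun m => m.testBit t) h
      simpa [Nat.testBit_mod_two_pow, Nat.testBit_two_pow_sub_one, ht,
        Nat.lt_succ_of_lt ht] using this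
    · have := congrArg (fun m => m.testBit i) h
      simpa [Nat.testBit_mod_two_pow, Nat.testBit_two_pow_sub_one] using this
  · rintro ⟨h1, h2⟩
    apply Nat.eq_of_testBit_eq
    intro j
    rcases lt_trichotomy j i with hj | hj | hj
    · simp [Nat.testBit_mod_two_pow, Nat.testBit_two_pow_sub_one, hj,
        Nat.lt_succ_of_lt hj, h1 j hj]
    · subst hj
      simp [Nat.testBit_mod_two_pow, Nat.testBit_two_pow_sub_one, h2]
    · have ha : ¬ j < i + 1 := by omega
      have hb : ¬ j < i := by omega
      simp [Nat.testBit_mod_two_pow, Nat.testBit_two_pow_sub_one, ha, hb]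

lemma testBit_succ_of_pattern (n i : ℕ) (h : n % 2 ^ (i + 1) = 2 ^ i - 1) (t : ℕ) :
    (n + 1).testBit t =
      (if t < i then false else if t = i then true else n.testBit t) := by
  have ha : n = 2 ^ (i + 1) * (n / 2 ^ (i + 1)) + (2 ^ i - 1) := by
    conv_lhs => rw [← Nat.div_add_mod n (2 ^ (i + 1))]
    rw [h]
  have hpos : 1 ≤ 2 ^ i := Nat.one_le_two_pow
  have hlt : 2 ^ i < 2 ^ (i + 1) := by
    have := Nat.pow_lt_pow_right (le_refl 2) (Nat.lt_succ_self i)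
    omega
  have hsucc : n + 1 = 2 ^ (i + 1) * (n / 2 ^ (i + 1)) + 2 ^ i := by omega
  rcases lt_trichotomy t i with ht | ht | ht
  · have h1 : (n + 1) % 2 ^ (i + 1) = 2 ^ i := by
      rw [hsucc, Nat.mul_add_mod, Nat.mod_eq_of_lt hlt]
    have h2 : (n + 1).testBit t = ((n + 1) % 2 ^ (i + 1)).testBit t := by
      simp [Nat.testBit_mod_two_pow, Nat.lt_succ_of_lt ht]
    rw [h2, h1, Nat.testBit_two_pow]
    simp [ht]
    omega
  · subst ht
    have h1 : (n + 1) % 2 ^ (t + 1) = 2 ^ t := by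
      rw [hsucc, Nat.mul_add_mod, Nat.mod_eq_of_lt hlt]
    have h2 : (n + 1).testBit t = ((n + 1) % 2 ^ (t + 1)).testBit t := by
      simp [Nat.testBit_mod_two_pow]
    rw [h2, h1, Nat.testBit_two_pow]
    simp
  · have hdiv : (n + 1) / 2 ^ (i + 1) = n / 2 ^ (i + 1) := by
      rw [hsucc, Nat.mul_add_div (Nat.pos_of_ne_zero (by positivity)),
        Nat.div_eq_of_lt hlt]
      omega
    have h1 : (n + 1).testBit t = ((n + 1) / 2 ^ (i + 1)).testBit (t - (i + 1)) := by
      rw [testBit_div_two_pow]; congr 1; omega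
    have h2 : n.testBit t = (n / 2 ^ (i + 1)).testBit (t - (i + 1)) := by
      rw [testBit_div_two_pow]; congr 1; omega
    rw [h1, hdiv, ← h2]
    have h3 : ¬ t < i := by omega
    have h4 : t ≠ i := by omega
    simp [h3, h4]

lemma testBit_drop_of_pattern (n k : ℕ) (h : n % 2 ^ k = 2 ^ k - 1) (t : ℕ) :
    (n - (2 ^ k - 1)).testBit t = (if t < k then false else n.testBit t) := by
  have hpos : 1 ≤ 2 ^ k := Nat.one_le_two_pow
  have ha : n = 2 ^ k * (n / 2 ^ k) + (2 ^ k - 1) := by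
    conv_lhs => rw [← Nat.div_add_mod n (2 ^ k)]
    rw [h]
  have hb : n - (2 ^ k - 1) = 2 ^ k * (n / 2 ^ k) := by omega
  rcases lt_or_ge t k with ht | ht
  · have h1 : (2 ^ k * (n / 2 ^ k)) % 2 ^ k = 0 := Nat.mul_mod_right _ _
    have h2 : (n - (2 ^ k - 1)).testBit t = ((n - (2 ^ k - 1)) % 2 ^ k).testBit t := by
      simp [Nat.testBit_mod_two_pow, ht]
    rw [h2, hb, h1]
    simp [ht]
  · have hdiv : (n - (2 ^ k - 1)) / 2 ^ k = n / 2 ^ k := by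
      rw [hb, Nat.mul_div_cancel_left _ (Nat.pos_of_ne_zero (by positivity))]
    have h1 : (n - (2 ^ k - 1)).testBit t = ((n - (2 ^ k - 1)) / 2 ^ k).testBit (t - k) := by
      rw [testBit_div_two_pow]; congr 1; omega
    have h2 : n.testBit t = (n / 2 ^ k).testBit (t - k) := by
      rw [testBit_div_two_pow]; congr 1; omega
    rw [h1, hdiv, ← h2]
    simp [Nat.not_lt.2 ht]

lemma sum_bits (f : ℕ → Bool) (n : ℕ) :
    (∑ t ∈ Finset.range n, (if f t then 1 else 0) * 2 ^ t) < 2 ^ n ∧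
    ∀ t, (∑ t ∈ Finset.range n, (if f t then 1 else 0) * 2 ^ t).testBit t
        = (f t && decide (t < n)) := by
  induction n with
  | zero => simp
  | succ n ih =>
    obtain ⟨ihlt, ihbit⟩ := ih
    set S := ∑ t ∈ Finset.range n, (if f t then 1 else 0) * 2 ^ t with hS
    have hstep : ∑ t ∈ Finset.range (n + 1), (if f t then 1 else 0) * 2 ^ t
        = S + (if f n then 1 else 0) * 2 ^ n := Finset.sum_range_succ _ _
    have hc : (if f n then 1 else 0) * 2 ^ n ≤ 2 ^ n := by split <;> simp
    constructor
    · rw [hstep]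
      have : (2:ℕ) ^ (n+1) = 2 ^ n + 2 ^ n := by ring
      omega
    · intro t
      rw [hstep]
      rcases lt_trichotomy t n with ht | ht | ht
      · have hmod : (S + (if f n then 1 else 0) * 2 ^ n) % 2 ^ n = S := by
          rw [Nat.add_mul_mod_self_right]  -- might not match; fallback below
          exact Nat.mod_eq_of_lt ihlt
        have h2 : (S + (if f n then 1 else 0) * 2 ^ n).testBit t
            = ((S + (if f n then 1 else 0) * 2 ^ n) % 2 ^ n).testBit t := by
          simp [Nat.testBit_mod_two_pow, ht]
        rw [h2, hmod, ihbit]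
        simp [ht, Nat.lt_succ_of_lt ht]
      · subst ht
        have hdiv : (S + (if f t then 1 else 0) * 2 ^ t) / 2 ^ t
            = (if f t then 1 else 0) := by
          rw [Nat.add_mul_div_right _ _ (Nat.pos_of_ne_zero (by positivity)),
            Nat.div_eq_of_lt ihlt]
          omega
        rw [Nat.testBit_eq_decide_div_mod_eq, hdiv]
        split <;> simp [*]
      · have hlt2 : S + (if f n then 1 else 0) * 2 ^ n < 2 ^ t := by
          have h1 : (2:ℕ) ^ (n + 1) ≤ 2 ^ t := Nat.pow_le_pow_right (by norm_num) ht
          have : (2:ℕ) ^ (n+1) = 2 ^ n + 2 ^ n := by ring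
          omega
        rw [Nat.testBit_lt_two_pow hlt2]
        have : ¬ t < n + 1 := by omega
        simp [this]

lemma mem_iff_lt_card {m : ℕ} (S : Finset (Fin m))
    (hdc : ∀ a ∈ S, ∀ b : Fin m, b ≤ a → b ∈ S) (j : Fin m) :
    j ∈ S ↔ (j : ℕ) < S.card := by
  constructor
  · intro hj
    have hsub : Finset.Iic j ⊆ S := fun b hb => hdc j hj b (Finset.mem_Iic.mp hb)
    have := Finset.card_le_card hsub
    rw [Fin.card_Iic] at this
    omega
  · intro hj
    by_contra hjS
    have hsub : S ⊆ Finset.Iio j := by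
      intro a ha
      rw [Finset.mem_Iio]
      rcases lt_or_ge a j with h | h
      · exact h
      · exact absurd (hdc a ha j h) hjS
    have := Finset.card_le_card hsub
    rw [Fin.card_Iio] at this
    omega

end BMCAux

open BMCAux

/-- The paper's structural decomposition of a directed edge: for grid points
`p` and `q`, the curve values satisfy `F_γ(q) = F_γ(p) + 1` iff there is a
single dimension `b` with a rise pattern at some bit `i` (bit `i` of `p b` is
`0`, preceded by `i` trailing ones, and `p b` increases by one), while every
other dimension `i'` exhibits the matching drop pattern (its `k` trailing one
bits are reset to zero, where `k` counts the bit positions of dimension `i'`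
placed by `γ` below position `γ(b, i)`). -/
theorem bmc_directed_edge_iff_rise_drop (d ℓ : ℕ) (hd : 1 ≤ d) (hl : 1 ≤ ℓ)
    (γ : Fin d × Fin ℓ ≃ Fin (d * ℓ))
    (hγ : ∀ i : Fin d, StrictMono fun j : Fin ℓ => γ (i, j))
    (F : (Fin d → ℕ) → ℕ)
    (hF : ∀ p, F p = ∑ i : Fin d, ∑ j : Fin ℓ,
        (if Nat.testBit (p i) j then 1 else 0) * 2 ^ (γ (i, j) : ℕ))
    (p q : Fin d → ℕ) (hp : ∀ i, p i < 2 ^ ℓ) (hq : ∀ i, q i < 2 ^ ℓ) :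
    F q = F p + 1 ↔
      ∃ (b : Fin d) (i : Fin ℓ),
        (p b % 2 ^ ((i : ℕ) + 1) = 2 ^ (i : ℕ) - 1 ∧ q b = p b + 1) ∧
        (∀ i' : Fin d, i' ≠ b →
          (fun k => p i' % 2 ^ k = 2 ^ k - 1 ∧ q i' = p i' - (2 ^ k - 1))
            ((Finset.univ.filter fun j : Fin ℓ => γ (i', j) < γ (b, i)).card)) := by
  classical
  set g : (Fin d → ℕ) → ℕ → Bool := fun r t =>
    if h : t < d * ℓ then (r (γ.symm ⟨t, h⟩).1).testBit ((γ.symm ⟨t, h⟩).2 : ℕ)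
    else false with hgdef
  have hg : ∀ r (x : Fin d × Fin ℓ), g r ((γ x : Fin (d * ℓ)) : ℕ) = (r x.1).testBit x.2 := by
    intro r x
    have h : ((γ x : Fin (d * ℓ)) : ℕ) < d * ℓ := (γ x).isLt
    rw [hgdef]
    simp only [dif_pos h]
    have he : (⟨((γ x : Fin (d * ℓ)) : ℕ), h⟩ : Fin (d * ℓ)) = γ x := Fin.eta _ _
    rw [he, Equiv.symm_apply_apply]
  have hFsum : ∀ r, F r = ∑ t ∈ Finset.range (d * ℓ), (if g r t then 1 else 0) * 2 ^ t := by
    intro r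
    rw [hF]
    rw [← Fin.sum_univ_eq_sum_range (fun t => (if g r t then 1 else 0) * 2 ^ t) (d * ℓ)]
    rw [← Equiv.sum_comp γ (fun t : Fin (d * ℓ) => (if g r (t : ℕ) then 1 else 0) * 2 ^ (t : ℕ))]
    rw [Fintype.sum_prod_type]
    refine Finset.sum_congr rfl fun a _ => Finset.sum_congr rfl fun c _ => ?_
    rw [hg r (a, c)]
  have hFbit : ∀ r t, (F r).testBit t = (g r t && decide (t < d * ℓ)) := by
    intro r t
    rw [hFsum r]
    exact (sum_bits (g r) (d * ℓ)).2 t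
  have hFlt : ∀ r, F r < 2 ^ (d * ℓ) := by
    intro r
    rw [hFsum r]
    exact (sum_bits (g r) (d * ℓ)).1
  have hbit : ∀ r (b : Fin d) (i : Fin ℓ),
      (F r).testBit ((γ (b, i) : Fin (d * ℓ)) : ℕ) = (r b).testBit i := by
    intro r b i
    rw [hFbit, hg r (b, i)]
    simp [(γ (b, i)).isLt]
  have hbit' : ∀ r (t : Fin (d * ℓ)),
      (F r).testBit (t : ℕ) = (r (γ.symm t).1).testBit ((γ.symm t).2 : ℕ) := by
    intro r t
    have hx : γ ((γ.symm t).1, (γ.symm t).2) = t := by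
      rw [Prod.mk.eta, Equiv.apply_symm_apply]
    have := hbit r (γ.symm t).1 (γ.symm t).2
    rwa [hx] at this
  constructor
  · -- forward direction
    intro hFq
    have hFplt := hFlt p
    have hFqlt := hFlt q
    have hex : ∃ s, (F p).testBit s = false :=
      ⟨d * ℓ, Nat.testBit_lt_two_pow hFplt⟩
    set s := Nat.find hex with hsdef
    have hs : (F p).testBit s = false := Nat.find_spec hex
    have hmin : ∀ t, t < s → (F p).testBit t = true := by
      intro t ht
      have := Nat.find_min hex ht
      simpa using this
    have hsL : s < d * ℓ := by
      by_contra hcon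
      push_neg at hcon
      have hall : F p % 2 ^ (d * ℓ) = 2 ^ (d * ℓ) - 1 :=
        (mod_pred_iff _ _).2 (fun t ht => hmin t (lt_of_lt_of_le ht hcon))
      rw [Nat.mod_eq_of_lt hFplt] at hall
      have h1 : (1:ℕ) ≤ 2 ^ (d * ℓ) := Nat.one_le_two_pow
      omega
    obtain ⟨b, i, hγs⟩ : ∃ b i, γ (b, i) = ⟨s, hsL⟩ :=
      ⟨(γ.symm ⟨s, hsL⟩).1, (γ.symm ⟨s, hsL⟩).2, by rw [Prod.mk.eta, Equiv.apply_symm_apply]⟩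
    have hvs : ((γ (b, i) : Fin (d * ℓ)) : ℕ) = s := by rw [hγs]
    have hFp_pat : F p % 2 ^ (s + 1) = 2 ^ s - 1 := (mod_succ_iff _ _).2 ⟨hmin, hs⟩
    have hsucc := testBit_succ_of_pattern (F p) s hFp_pat
    have hbps : (p b).testBit i = false := by
      rw [← hbit p b i, hvs]; exact hs
    have hpb_lower : ∀ t, t < (i : ℕ) → (p b).testBit t = true := by
      intro t ht
      have htℓ : t < ℓ := ht.trans i.isLt
      have hlt : γ (b, ⟨t, htℓ⟩) < γ (b, i) := hγ b (by exact ht)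
      have hlt' : ((γ (b, ⟨t, htℓ⟩) : Fin (d * ℓ)) : ℕ) < s := by
        rw [← hvs]; exact hlt
      have := hmin _ hlt'
      rwa [hbit p b ⟨t, htℓ⟩] at this
    have hpat_b : p b % 2 ^ ((i : ℕ) + 1) = 2 ^ (i : ℕ) - 1 :=
      (mod_succ_iff _ _).2 ⟨hpb_lower, hbps⟩
    refine ⟨b, i, ⟨hpat_b, ?_⟩, ?_⟩
    · -- q b = p b + 1
      apply Nat.eq_of_testBit_eq
      intro t
      have hrhs := testBit_succ_of_pattern (p b) (i : ℕ) hpat_b t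
      rcases lt_or_ge t ℓ with htℓ | htℓ
      · have hlhs : (q b).testBit t = (F q).testBit ((γ (b, ⟨t, htℓ⟩) : Fin (d * ℓ)) : ℕ) :=
          (hbit q b ⟨t, htℓ⟩).symm
        rcases lt_trichotomy t (i : ℕ) with ht | ht | ht
        · have h1 : γ (b, (⟨t, htℓ⟩ : Fin ℓ)) < γ (b, i) := hγ b (by exact ht)
          have h1' : ((γ (b, (⟨t, htℓ⟩ : Fin ℓ)) : Fin (d * ℓ)) : ℕ) < s := by
            rw [← hvs]; exact h1
          rw [hlhs, hFq, hsucc, if_pos h1', hrhs, if_pos ht]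
        · have hji : (⟨t, htℓ⟩ : Fin ℓ) = i := Fin.ext ht
          rw [hlhs, hji, hFq, hsucc, hvs, if_neg (lt_irrefl s), if_pos rfl,
            hrhs, if_neg (by omega : ¬ t < (i : ℕ)), if_pos ht]
        · have h1 : γ (b, i) < γ (b, (⟨t, htℓ⟩ : Fin ℓ)) := hγ b (by exact ht)
          have h1' : s < ((γ (b, (⟨t, htℓ⟩ : Fin ℓ)) : Fin (d * ℓ)) : ℕ) := by
            rw [← hvs]; exact h1
          rw [hlhs, hFq, hsucc, if_neg (by omega : ¬ ((γ (b, (⟨t, htℓ⟩ : Fin ℓ)) : Fin (d * ℓ)) : ℕ) < s),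
            if_neg (by omega : ((γ (b, (⟨t, htℓ⟩ : Fin ℓ)) : Fin (d * ℓ)) : ℕ) ≠ s),
            hrhs, if_neg (by omega : ¬ t < (i : ℕ)), if_neg (by omega : t ≠ (i : ℕ))]
          exact hbit p b ⟨t, htℓ⟩
      · have h1 : (q b).testBit t = false :=
          Nat.testBit_lt_two_pow (lt_of_lt_of_le (hq b)
            (Nat.pow_le_pow_right (by norm_num) htℓ))
        have h2 : (p b).testBit t = false :=
          Nat.testBit_lt_two_pow (lt_of_lt_of_le (hp b)
            (Nat.pow_le_pow_right (by norm_num) htℓ))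
        have hiℓ := i.isLt
        rw [h1, hrhs, if_neg (by omega : ¬ t < (i : ℕ)), if_neg (by omega : t ≠ (i : ℕ)), h2]
    · -- drop dimensions
      intro i' hne
      set S : Finset (Fin ℓ) := Finset.univ.filter (fun j : Fin ℓ => γ (i', j) < γ (b, i))
        with hSdef
      set k := S.card with hkdef
      have hdc : ∀ a ∈ S, ∀ c : Fin ℓ, c ≤ a → c ∈ S := by
        intro a ha c hca
        rw [hSdef, Finset.mem_filter] at ha ⊢
        exact ⟨Finset.mem_univ _, lt_of_le_of_lt ((hγ i').monotone hca) ha.2⟩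
      have hmem : ∀ j : Fin ℓ, j ∈ S ↔ (j : ℕ) < k := fun j => mem_iff_lt_card S hdc j
      have hkℓ : k ≤ ℓ := by
        have h1 : S.card ≤ (Finset.univ : Finset (Fin ℓ)).card :=
          Finset.card_le_card (Finset.filter_subset _ _)
        simpa using h1
      have hpat_i' : p i' % 2 ^ k = 2 ^ k - 1 := by
        apply (mod_pred_iff _ _).2
        intro t ht
        have htℓ : t < ℓ := lt_of_lt_of_le ht hkℓ
        have hjS : (⟨t, htℓ⟩ : Fin ℓ) ∈ S := (hmem _).2 ht
        rw [hSdef, Finset.mem_filter] at hjS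
        have h1' : ((γ (i', (⟨t, htℓ⟩ : Fin ℓ)) : Fin (d * ℓ)) : ℕ) < s := by
          rw [← hvs]; exact hjS.2
        have := hmin _ h1'
        rwa [hbit p i' ⟨t, htℓ⟩] at this
      refine ⟨hpat_i', ?_⟩
      apply Nat.eq_of_testBit_eq
      intro t
      have hrhs := testBit_drop_of_pattern (p i') k hpat_i' t
      rcases lt_or_ge t ℓ with htℓ | htℓ
      · have hlhs : (q i').testBit t = (F q).testBit ((γ (i', ⟨t, htℓ⟩) : Fin (d * ℓ)) : ℕ) :=
          (hbit q i' ⟨t, htℓ⟩).symm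
        rcases lt_or_ge t k with htk | htk
        · have hjS : (⟨t, htℓ⟩ : Fin ℓ) ∈ S := (hmem _).2 htk
          rw [hSdef, Finset.mem_filter] at hjS
          have h1' : ((γ (i', (⟨t, htℓ⟩ : Fin ℓ)) : Fin (d * ℓ)) : ℕ) < s := by
            rw [← hvs]; exact hjS.2
          rw [hlhs, hFq, hsucc, if_pos h1', hrhs, if_pos htk]
        · have hjS : (⟨t, htℓ⟩ : Fin ℓ) ∉ S := fun h => by
            have h9 : t < k := (hmem _).1 h
            omega
          rw [hSdef, Finset.mem_filter] at hjS
          have hnlt : ¬ γ (i', (⟨t, htℓ⟩ : Fin ℓ)) < γ (b, i) := fun hcon =>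
            hjS ⟨Finset.mem_univ _, hcon⟩
          have hneq : γ (i', (⟨t, htℓ⟩ : Fin ℓ)) ≠ γ (b, i) := by
            intro hcon
            exact hne (congrArg Prod.fst (γ.injective hcon))
          have h2 : ¬ ((γ (i', (⟨t, htℓ⟩ : Fin ℓ)) : Fin (d * ℓ)) : ℕ) < s := by
            intro hcon
            exact hnlt (by rw [← hvs] at hcon; exact hcon)
          have h3 : ((γ (i', (⟨t, htℓ⟩ : Fin ℓ)) : Fin (d * ℓ)) : ℕ) ≠ s := by
            intro hcon
            exact hneq (Fin.ext (by rw [hvs]; exact hcon))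
          rw [hlhs, hFq, hsucc, if_neg h2, if_neg h3, hrhs,
            if_neg (by omega : ¬ t < k)]
          exact hbit p i' ⟨t, htℓ⟩
      · have h1 : (q i').testBit t = false :=
          Nat.testBit_lt_two_pow (lt_of_lt_of_le (hq i')
            (Nat.pow_le_pow_right (by norm_num) htℓ))
        have h2 : (p i').testBit t = false :=
          Nat.testBit_lt_two_pow (lt_of_lt_of_le (hp i')
            (Nat.pow_le_pow_right (by norm_num) htℓ))
        rw [h1, hrhs, if_neg (by omega : ¬ t < k), h2]
  · -- reverse direction
    rintro ⟨b, i, ⟨hpb, hqb⟩, hrest⟩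
    simp only at hrest
    have hpb_bits := (mod_succ_iff (p b) (i : ℕ)).1 hpb
    have hSfact : ∀ i' : Fin d, i' ≠ b →
        ∀ j : Fin ℓ, (j ∈ Finset.univ.filter (fun j : Fin ℓ => γ (i', j) < γ (b, i))) ↔
          (j : ℕ) < (Finset.univ.filter (fun j : Fin ℓ => γ (i', j) < γ (b, i))).card := by
      intro i' _ j
      apply mem_iff_lt_card
      intro a ha c hca
      rw [Finset.mem_filter] at ha ⊢
      exact ⟨Finset.mem_univ _, lt_of_le_of_lt ((hγ i').monotone hca) ha.2⟩
    have hmin : ∀ t, t < ((γ (b, i) : Fin (d * ℓ)) : ℕ) → (F p).testBit t = true := by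
      intro t ht
      have htL : t < d * ℓ := lt_trans ht (γ (b, i)).isLt
      rw [show t = ((⟨t, htL⟩ : Fin (d * ℓ)) : ℕ) from rfl, hbit' p ⟨t, htL⟩]
      have hx : γ ((γ.symm (⟨t, htL⟩ : Fin (d * ℓ))).1, (γ.symm (⟨t, htL⟩ : Fin (d * ℓ))).2)
          = (⟨t, htL⟩ : Fin (d * ℓ)) := by
        rw [Prod.mk.eta, Equiv.apply_symm_apply]
      by_cases hb2 : (γ.symm (⟨t, htL⟩ : Fin (d * ℓ))).1 = b
      · have hji : (γ.symm (⟨t, htL⟩ : Fin (d * ℓ))).2 < i := by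
          apply (hγ b).lt_iff_lt.1
          show γ (b, (γ.symm (⟨t, htL⟩ : Fin (d * ℓ))).2) < γ (b, i)
          conv_lhs => rw [← hb2]
          rw [hx]
          exact ht
        rw [hb2]
        exact hpb_bits.1 _ hji
      · have hjk : (γ.symm (⟨t, htL⟩ : Fin (d * ℓ))).2 ∈
            Finset.univ.filter (fun j : Fin ℓ =>
              γ ((γ.symm (⟨t, htL⟩ : Fin (d * ℓ))).1, j) < γ (b, i)) := by
          rw [Finset.mem_filter]
          exact ⟨Finset.mem_univ _, by rw [hx]; exact ht⟩
        have := (hSfact _ hb2 _).1 hjk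
        exact (mod_pred_iff _ _).1 (hrest _ hb2).1 _ this
    have hs0 : (F p).testBit ((γ (b, i) : Fin (d * ℓ)) : ℕ) = false := by
      rw [hbit p b i]
      exact hpb_bits.2
    have hFp_pat : F p % 2 ^ (((γ (b, i) : Fin (d * ℓ)) : ℕ) + 1)
        = 2 ^ ((γ (b, i) : Fin (d * ℓ)) : ℕ) - 1 := (mod_succ_iff _ _).2 ⟨hmin, hs0⟩
    have hsucc := testBit_succ_of_pattern (F p) _ hFp_pat
    apply Nat.eq_of_testBit_eq
    intro t
    rcases lt_or_ge t (d * ℓ) with htL | htL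
    · have hlhs : (F q).testBit t
          = (q (γ.symm (⟨t, htL⟩ : Fin (d * ℓ))).1).testBit
            ((γ.symm (⟨t, htL⟩ : Fin (d * ℓ))).2 : ℕ) := hbit' q ⟨t, htL⟩
      have hx : γ ((γ.symm (⟨t, htL⟩ : Fin (d * ℓ))).1, (γ.symm (⟨t, htL⟩ : Fin (d * ℓ))).2)
          = (⟨t, htL⟩ : Fin (d * ℓ)) := by
        rw [Prod.mk.eta, Equiv.apply_symm_apply]
      set i₂ := (γ.symm (⟨t, htL⟩ : Fin (d * ℓ))).1 with hi2def
      set j := (γ.symm (⟨t, htL⟩ : Fin (d * ℓ))).2 with hjdef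
      rw [hlhs, hsucc t]
      by_cases hb2 : i₂ = b
      · rw [hb2] at hx ⊢
        rw [hqb, testBit_succ_of_pattern (p b) (i : ℕ) hpb]
        rcases lt_trichotomy t ((γ (b, i) : Fin (d * ℓ)) : ℕ) with ht | ht | ht
        · have hji : (j : ℕ) < (i : ℕ) := by
            apply (hγ b).lt_iff_lt.1
            show γ (b, j) < γ (b, i)
            rw [hx]
            exact ht
          rw [if_pos ht, if_pos hji]
        · have hji : j = i := by
            have h5 : γ (b, j) = γ (b, i) := by rw [hx]; exact Fin.ext ht
            exact congrArg Prod.snd (γ.injective h5)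
          have hji' : (j : ℕ) = (i : ℕ) := congrArg Fin.val hji
          rw [if_neg (by omega : ¬ t < ((γ (b, i) : Fin (d * ℓ)) : ℕ)), if_pos ht,
            if_neg (by omega : ¬ (j : ℕ) < (i : ℕ)), if_pos hji']
        · have hji : (i : ℕ) < (j : ℕ) := by
            apply (hγ b).lt_iff_lt.1
            show γ (b, i) < γ (b, j)
            rw [hx]
            exact ht
          rw [if_neg (by omega : ¬ t < ((γ (b, i) : Fin (d * ℓ)) : ℕ)),
            if_neg (by omega : t ≠ ((γ (b, i) : Fin (d * ℓ)) : ℕ)),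
            if_neg (by omega : ¬ (j : ℕ) < (i : ℕ)), if_neg (by omega : (j : ℕ) ≠ (i : ℕ))]
          have h6 := hbit' p (⟨t, htL⟩ : Fin (d * ℓ))
          rw [← hi2def, ← hjdef, hb2] at h6
          exact h6.symm
      · obtain ⟨hd1, hd2⟩ := hrest i₂ hb2
        rw [hd2, testBit_drop_of_pattern (p i₂) _ hd1]
        have hts : t ≠ ((γ (b, i) : Fin (d * ℓ)) : ℕ) := by
          intro hcon
          apply hb2
          have h5 : γ (i₂, j) = γ (b, i) := by
            rw [hx]; exact Fin.ext hcon
          exact congrArg Prod.fst (γ.injective h5)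
        rcases lt_or_ge t ((γ (b, i) : Fin (d * ℓ)) : ℕ) with ht | ht
        · have hjk : (j : ℕ) <
              (Finset.univ.filter (fun j : Fin ℓ => γ (i₂, j) < γ (b, i))).card := by
            apply (hSfact i₂ hb2 j).1
            rw [Finset.mem_filter]
            exact ⟨Finset.mem_univ _, by rw [hx]; exact ht⟩
          rw [if_pos ht, if_pos hjk]
        · have hjk : ¬ (j : ℕ) <
              (Finset.univ.filter (fun j : Fin ℓ => γ (i₂, j) < γ (b, i))).card := by
            intro hcon
            have h5 := (hSfact i₂ hb2 j).2 hcon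
            rw [Finset.mem_filter] at h5
            have h6 : γ (i₂, j) < γ (b, i) := h5.2
            rw [hx] at h6
            have : t < ((γ (b, i) : Fin (d * ℓ)) : ℕ) := h6
            omega
          rw [if_neg (by omega : ¬ t < ((γ (b, i) : Fin (d * ℓ)) : ℕ)), if_neg hts,
            if_neg hjk]
          have h6 := hbit' p (⟨t, htL⟩ : Fin (d * ℓ))
          rw [← hi2def, ← hjdef] at h6
          exact h6.symm
    · have h1 : (F q).testBit t = false :=
        Nat.testBit_lt_two_pow (lt_of_lt_of_le (hFlt q)
          (Nat.pow_le_pow_right (by norm_num) htL))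
      have hFpne : F p ≠ 2 ^ (d * ℓ) - 1 := by
        intro hcon
        rw [hcon, Nat.testBit_two_pow_sub_one] at hs0
        simp [(γ (b, i)).isLt] at hs0
      have h2 : F p + 1 < 2 ^ (d * ℓ) := by
        have := hFlt p
        omega
      have h3 : (F p + 1).testBit t = false :=
        Nat.testBit_lt_two_pow (lt_of_lt_of_le h2
          (Nat.pow_le_pow_right (by norm_num) htL))
      rw [h1, h3]
end

section
/- Let d ≥ 1, ℓ ≥ 1, and let γ : Fin d × Fin ℓ ≃ Fin (d·ℓ) be a bijection such that for each i the map j ↦ γ(i, j) is strictly monotone, with curve value F_γ as defined. If p and q are grid points with F_γ(q) = F_γ(p) + 1, then there is exactly one dimension b : Fin d with q b > p b; for this b one has q b = p b + 1, and for every other dimension i ≠ b one has q i ≤ p i. -/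
/-!
The curve value interleaves bits: bit `γ (i, j)` of `F p` is bit `j` of `p i`. Adding one to
`F p` clears its trailing ones, sets its lowest zero bit `k = γ (b, jb)`, and leaves every higher
bit alone. Hence every coordinate other than `b` only loses bits and weakly drops. Since
`j ↦ γ (b, j)` is strictly increasing, the trailing ones of `p b` are exactly its bits below
`jb`, and the same carry turns `p b` into `p b + 1`.
-/

open Function

namespace Nat

def IsLowestZeroBit (n k : ℕ) : Prop :=
  n.testBit k = false ∧ ∀ t < k, n.testBit t = true

theorem exists_isLowestZeroBit (n : ℕ) : ∃ k, IsLowestZeroBit n k := by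
  classical
  have h : ∃ k, n.testBit k = false := ⟨n, testBit_lt_two_pow n.lt_two_pow_self⟩
  exact ⟨Nat.find h, Nat.find_spec h, fun t ht => by simpa using Nat.find_min h ht⟩

theorem IsLowestZeroBit.testBit_succ {n k : ℕ} (h : IsLowestZeroBit n k) (t : ℕ) :
    (n + 1).testBit t = (decide (t = k) || decide (k < t) && n.testBit t) := by
  induction k generalizing n t with
  | zero =>
    have hn : n % 2 = 0 := mod_two_eq_zero_iff_testBit_zero.2 h.1
    cases t with
    | zero => simp; omega
    | succ t =>
      rw [testBit_add_one, testBit_add_one, show (n + 1) / 2 = n / 2 by omega]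
      simp
  | succ k ih =>
    have hn : n % 2 = 1 := mod_two_eq_one_iff_testBit_zero.2 (h.2 0 k.succ_pos)
    have hhalf : IsLowestZeroBit (n / 2) k :=
      ⟨by rw [testBit_div_two, h.1], fun t ht => by rw [testBit_div_two]; exact h.2 _ (by omega)⟩
    cases t with
    | zero => simp; omega
    | succ t =>
      rw [testBit_add_one, testBit_add_one, show (n + 1) / 2 = n / 2 + 1 by omega, ih hhalf]
      simp

theorem lt_of_testBit_of_lt_two_pow {x ℓ t : ℕ} (hx : x < 2 ^ ℓ) (ht : x.testBit t) : t < ℓ :=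
  (Nat.pow_lt_pow_iff_right (by norm_num)).1 ((ge_two_pow_of_testBit ht).trans_lt hx)

theorem testBit_sum_two_pow_iff (s : Finset ℕ) (t : ℕ) :
    (∑ i ∈ s, 2 ^ i).testBit t ↔ t ∈ s := by
  rw [← mem_bitIndices, ← List.mem_toFinset, Finset.toFinset_bitIndices_sum_two_pow]

end Nat

def curveValue {ι : Type*} [Fintype ι] {ℓ : ℕ} (γ : ι × Fin ℓ → ℕ) (p : ι → ℕ) : ℕ :=
  ∑ i, ∑ j : Fin ℓ, (if (p i).testBit j then 1 else 0) * 2 ^ γ (i, j)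

section CurveValue

variable {ι : Type*} [Fintype ι] {ℓ : ℕ} {γ : ι × Fin ℓ → ℕ}

theorem testBit_curveValue_iff (hγ : Injective γ) (p : ι → ℕ) (t : ℕ) :
    (curveValue γ p).testBit t ↔ ∃ x, (p x.1).testBit x.2 ∧ γ x = t := by
  classical
  have hsum : curveValue γ p =
      ∑ m ∈ (Finset.univ.filter fun x : ι × Fin ℓ => (p x.1).testBit x.2).map ⟨γ, hγ⟩, 2 ^ m := by
    rw [Finset.sum_map, Finset.sum_filter, curveValue, ← Finset.univ_product_univ,
      Finset.sum_product]
    simp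
  rw [hsum, Nat.testBit_sum_two_pow_iff]
  simp

theorem testBit_curveValue (hγ : Injective γ) (p : ι → ℕ) (x : ι × Fin ℓ) :
    (curveValue γ p).testBit (γ x) = (p x.1).testBit x.2 := by
  rw [Bool.eq_iff_iff, testBit_curveValue_iff hγ]
  simp [hγ.eq_iff]

variable {p q : ι → ℕ} {k : ℕ}

theorem testBit_of_curveValue_eq_succ (hγ : Injective γ)
    (hk : Nat.IsLowestZeroBit (curveValue γ p) k)
    (hedge : curveValue γ q = curveValue γ p + 1) (x : ι × Fin ℓ) :
    (q x.1).testBit x.2 = (decide (γ x = k) || decide (k < γ x) && (p x.1).testBit x.2) := by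
  rw [← testBit_curveValue hγ, hedge, hk.testBit_succ, testBit_curveValue hγ]

theorem exists_eq_of_curveValue_eq_succ (hγ : Injective γ)
    (hk : Nat.IsLowestZeroBit (curveValue γ p) k)
    (hedge : curveValue γ q = curveValue γ p + 1) : ∃ x, γ x = k := by
  have hqk : (curveValue γ q).testBit k := by simp [hedge, hk.testBit_succ]
  obtain ⟨x, -, hx⟩ := (testBit_curveValue_iff hγ q k).1 hqk
  exact ⟨x, hx⟩

theorem le_of_curveValue_eq_succ (hγ : Injective γ) (hk : Nat.IsLowestZeroBit (curveValue γ p) k)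
    (hedge : curveValue γ q = curveValue γ p + 1) {i : ι} (hq : q i < 2 ^ ℓ)
    (hi : ∀ j, γ (i, j) ≠ k) : q i ≤ p i := by
  refine Nat.le_of_testBit fun t ht => ?_
  have hbit := testBit_of_curveValue_eq_succ hγ hk hedge
    (i, ⟨t, Nat.lt_of_testBit_of_lt_two_pow hq ht⟩)
  simp_all

theorem eq_succ_of_curveValue_eq_succ (hγ : Injective γ)
    (hk : Nat.IsLowestZeroBit (curveValue γ p) k)
    (hedge : curveValue γ q = curveValue γ p + 1) {b : ι} (hmono : StrictMono fun j => γ (b, j))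
    (hp : p b < 2 ^ ℓ) (hq : q b < 2 ^ ℓ) {jb : Fin ℓ} (hbk : γ (b, jb) = k) :
    q b = p b + 1 := by
  have hlt : ∀ j j', γ (b, j) < γ (b, j') ↔ j < j' := fun _ _ => hmono.lt_iff_lt
  have heq : ∀ j j', γ (b, j) = γ (b, j') ↔ j = j' := fun _ _ => hmono.injective.eq_iff
  have hjb : Nat.IsLowestZeroBit (p b) jb := by
    refine ⟨?_, fun t ht => ?_⟩
    · rw [← testBit_curveValue hγ p (b, jb), hbk, hk.1]
    · have htl : t < ℓ := ht.trans jb.2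
      rw [← testBit_curveValue hγ p (b, ⟨t, htl⟩)]
      exact hk.2 _ (hbk ▸ (hlt ⟨t, htl⟩ jb).2 ht)
  refine Nat.eq_of_testBit_eq fun t => ?_
  rw [hjb.testBit_succ]
  by_cases ht : t < ℓ
  · have hbit := testBit_of_curveValue_eq_succ hγ hk hedge (b, ⟨t, ht⟩)
    simp only at hbit
    simp [hbit, ← hbk, hlt, heq, Fin.ext_iff, Fin.lt_def]
  · have hℓt : 2 ^ ℓ ≤ 2 ^ t := Nat.pow_le_pow_right two_pos (not_lt.1 ht)
    have htjb : t ≠ jb := by omega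
    simp [Nat.testBit_lt_two_pow (hq.trans_le hℓt), Nat.testBit_lt_two_pow (hp.trans_le hℓt), htjb]

end CurveValue

theorem bmc_directed_edge_unique_rise_general (d ℓ : ℕ)
    (γ : Fin d × Fin ℓ ≃ Fin (d * ℓ))
    (hγ : ∀ i : Fin d, StrictMono fun j : Fin ℓ => γ (i, j))
    (F : (Fin d → ℕ) → ℕ)
    (hF : ∀ p, F p = ∑ i : Fin d, ∑ j : Fin ℓ,
        (if Nat.testBit (p i) j then 1 else 0) * 2 ^ (γ (i, j) : ℕ))
    (p q : Fin d → ℕ) (hp : ∀ i, p i < 2 ^ ℓ) (hq : ∀ i, q i < 2 ^ ℓ)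
    (hedge : F q = F p + 1) :
    ∃ b : Fin d, q b = p b + 1 ∧ (∀ i : Fin d, i ≠ b → q i ≤ p i) ∧
      ∀ b' : Fin d, p b' < q b' → b' = b := by
  obtain rfl : F = curveValue fun x => (γ x : ℕ) := funext hF
  have hinj : Injective fun x => (γ x : ℕ) := Fin.val_injective.comp γ.injective
  obtain ⟨k, hk⟩ := Nat.exists_isLowestZeroBit (curveValue (fun x => (γ x : ℕ)) p)
  obtain ⟨⟨b, jb⟩, hbk⟩ := exists_eq_of_curveValue_eq_succ hinj hk hedge
  have hdrop : ∀ i, i ≠ b → q i ≤ p i := fun i hi =>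
    le_of_curveValue_eq_succ hinj hk hedge (hq i) fun j hj =>
      hi (congrArg Prod.fst (hinj (hj.trans hbk.symm)))
  refine ⟨b, ?_, hdrop, fun b' hb' => not_imp_comm.1 (hdrop b') hb'.not_ge⟩
  exact eq_succ_of_curveValue_eq_succ hinj hk hedge (Fin.val_strictMono.comp (hγ b)) (hp b) (hq b)
    hbk

/-- Along any directed edge of a bit-merging curve, exactly one coordinate
rises (by exactly one) while all other coordinates weakly drop. -/
theorem bmc_directed_edge_unique_rise (d ℓ : ℕ) (hd : 1 ≤ d) (hl : 1 ≤ ℓ)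
    (γ : Fin d × Fin ℓ ≃ Fin (d * ℓ))
    (hγ : ∀ i : Fin d, StrictMono fun j : Fin ℓ => γ (i, j))
    (F : (Fin d → ℕ) → ℕ)
    (hF : ∀ p, F p = ∑ i : Fin d, ∑ j : Fin ℓ,
        (if Nat.testBit (p i) j then 1 else 0) * 2 ^ (γ (i, j) : ℕ))
    (p q : Fin d → ℕ) (hp : ∀ i, p i < 2 ^ ℓ) (hq : ∀ i, q i < 2 ^ ℓ)
    (hedge : F q = F p + 1) :
    ∃ b : Fin d, q b = p b + 1 ∧ (∀ i : Fin d, i ≠ b → q i ≤ p i) ∧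
      ∀ b' : Fin d, p b' < q b' → b' = b :=
  bmc_directed_edge_unique_rise_general d ℓ γ hγ F hF p q hp hq hedge
end

section
/- Let d ≥ 1, ℓ ≥ 1, and let γ : Fin d × Fin ℓ ≃ Fin (d·ℓ) be a bijection such that for each i the map j ↦ γ(i, j) is strictly monotone, with curve value F_γ as defined. Let p_s and p_e be grid points with p_s i ≤ p_e i for all i, and let Q be the set of grid points p with p_s i ≤ p i ≤ p_e i for all i. For b : Fin d and i : Fin ℓ, let R(b, i) be the number of naturals c with p_s b ≤ c, c + 1 ≤ p_e b, and c mod 2^{i+1} = 2^i − 1; and for i' : Fin d and k : ℕ, let D(i', k) be the number of naturals c with c ≤ p_e i', c mod 2^k = 2^k − 1, and p_s i' ≤ c − (2^k − 1). Then the number of ordered pairs (p, q) ∈ Q × Q with F_γ(q) = F_γ(p) + 1 equals Σ_{b : Fin d} Σ_{i : Fin ℓ} R(b, i) · Π_{i' ≠ b} D(i', k(b, i, i')), where k(b, i, i') = |{ j : Fin ℓ | γ(i', j) < γ(b, i) }|. -/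
namespace BMCAux

lemma tb_decomp (u r n j : ℕ) (hr : r < 2 ^ n) :
    Nat.testBit (2 ^ n * u + r) j =
      if j < n then Nat.testBit r j else Nat.testBit u (j - n) := by
  rcases lt_or_ge j n with h | h
  · rw [if_pos h]
    have e1 : 2 ^ n * u + r = 2 ^ j * (2 ^ (n - j) * u) + r := by
      rw [← mul_assoc, ← pow_add, Nat.add_sub_cancel' (le_of_lt h)]
    have e2 : (2 ^ n * u + r) / 2 ^ j = 2 ^ (n - j) * u + r / 2 ^ j := by
      rw [e1, Nat.mul_add_div (by positivity)]
    have e3 : 2 ^ (n - j) * u = 2 * (2 ^ (n - j - 1) * u) := by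
      rw [← mul_assoc, ← pow_succ']
      congr 2
      omega
    simp only [Nat.testBit_eq_decide_div_mod_eq, e2, e3, Nat.mul_add_mod]
  · rw [if_neg (by omega)]
    have e2 : (2 ^ n * u + r) / 2 ^ j = u / 2 ^ (j - n) := by
      have h2 : (2:ℕ) ^ j = 2 ^ n * 2 ^ (j - n) := by
        rw [← pow_add]; congr 1; omega
      rw [h2, ← Nat.div_div_eq_div_mul, Nat.mul_add_div (by positivity),
        Nat.div_eq_of_lt hr, add_zero]
    simp only [Nat.testBit_eq_decide_div_mod_eq, e2]

lemma mod_two_pow_eq_iff_bits (c k : ℕ) :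
    c % 2 ^ k = 2 ^ k - 1 ↔ ∀ j, j < k → Nat.testBit c j = true := by
  constructor
  · intro h j hj
    have h2 := Nat.testBit_mod_two_pow c k j
    rw [h, Nat.testBit_two_pow_sub_one] at h2
    simpa [hj] using h2.symm
  · intro h
    apply Nat.eq_of_testBit_eq
    intro j
    rw [Nat.testBit_mod_two_pow, Nat.testBit_two_pow_sub_one]
    by_cases hj : j < k <;> simp [hj, h j]

lemma mod_rise_iff (c i : ℕ) :
    c % 2 ^ (i + 1) = 2 ^ i - 1 ↔
      ((∀ j, j < i → Nat.testBit c j = true) ∧ Nat.testBit c i = false) := by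
  constructor
  · intro h
    refine ⟨fun j hj => ?_, ?_⟩
    · have h2 := Nat.testBit_mod_two_pow c (i + 1) j
      rw [h, Nat.testBit_two_pow_sub_one] at h2
      simpa [hj, Nat.lt_succ_of_lt hj] using h2.symm
    · have h2 := Nat.testBit_mod_two_pow c (i + 1) i
      rw [h, Nat.testBit_two_pow_sub_one] at h2
      simpa using h2.symm
  · rintro ⟨h1, h2⟩
    apply Nat.eq_of_testBit_eq
    intro j
    rw [Nat.testBit_mod_two_pow, Nat.testBit_two_pow_sub_one]
    rcases lt_trichotomy j i with hj | rfl | hj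
    · simp [hj, Nat.lt_succ_of_lt hj, h1 j hj]
    · simp [h2]
    · simp [show ¬ j < i + 1 by omega, show ¬ j < i by omega]

lemma succ_bits {m t : ℕ} (h : m % 2 ^ (t + 1) = 2 ^ t - 1) (s : ℕ) :
    Nat.testBit (m + 1) s =
      if s < t then false else if s = t then true else Nat.testBit m s := by
  have hdm := Nat.div_add_mod m (2 ^ (t + 1))
  set u := m / 2 ^ (t + 1) with hu
  have hpt : 1 ≤ 2 ^ t := Nat.one_le_two_pow
  have hpt1 : (2:ℕ) ^ (t + 1) = 2 ^ t * 2 := pow_succ 2 t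
  have ee1 : 2 ^ (t + 1) * u = 2 ^ t * (2 * u) := by rw [hpt1]; ring
  have ee2 : 2 ^ t * (2 * u + 1) = 2 ^ t * (2 * u) + 2 ^ t := by ring
  have hm : m = 2 ^ t * (2 * u) + (2 ^ t - 1) := by
    rw [h] at hdm; omega
  have hm1 : m + 1 = 2 ^ t * (2 * u + 1) + 0 := by omega
  rw [hm1, tb_decomp (2 * u + 1) 0 t s (by positivity)]
  rcases lt_trichotomy s t with hs | rfl | hs
  · simp [hs]
  · rw [if_neg (lt_irrefl _), if_pos rfl, Nat.sub_self]
    simp [Nat.testBit_eq_decide_div_mod_eq, Nat.mul_add_mod]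
  · rw [if_neg (by omega), if_neg (by omega), if_neg (by omega)]
    conv_rhs => rw [hm]
    rw [tb_decomp (2 * u) (2 ^ t - 1) t s (by omega), if_neg (by omega)]
    have e : s - t = (s - t - 1) + 1 := by omega
    rw [e, Nat.testBit_add_one, Nat.testBit_add_one]
    congr 1
    omega

lemma drop_bits {c k : ℕ} (h : c % 2 ^ k = 2 ^ k - 1) (s : ℕ) :
    Nat.testBit (c - (2 ^ k - 1)) s = if s < k then false else Nat.testBit c s := by
  have hdm := Nat.div_add_mod c (2 ^ k)
  set u := c / 2 ^ k with hu
  have hpt : 1 ≤ 2 ^ k := Nat.one_le_two_pow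
  have hc : c = 2 ^ k * u + (2 ^ k - 1) := by rw [h] at hdm; omega
  have hc' : c - (2 ^ k - 1) = 2 ^ k * u + 0 := by omega
  rw [hc', tb_decomp u 0 k s (by positivity)]
  rcases lt_or_ge s k with hs | hs
  · simp [hs]
  · rw [if_neg (by omega), if_neg (by omega)]
    conv_rhs => rw [hc]
    rw [tb_decomp u (2 ^ k - 1) k s (by omega), if_neg (by omega)]

lemma sumBits_lt (g : ℕ → Bool) (n : ℕ) :
    (∑ t ∈ Finset.range n, (if g t then 1 else 0) * 2 ^ t) < 2 ^ n := by
  induction n with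
  | zero => simp
  | succ n ih =>
    rw [Finset.sum_range_succ, pow_succ]
    split <;> omega

lemma testBit_sumBits (g : ℕ → Bool) (n s : ℕ) :
    Nat.testBit (∑ t ∈ Finset.range n, (if g t then 1 else 0) * 2 ^ t) s =
      (decide (s < n) && g s) := by
  induction n generalizing s with
  | zero => simp
  | succ n ih =>
    rw [Finset.sum_range_succ]
    have hlt := sumBits_lt g n
    have e : (∑ t ∈ Finset.range n, (if g t then 1 else 0) * 2 ^ t) +
        (if g n then 1 else 0) * 2 ^ n
        = 2 ^ n * (if g n then 1 else 0) +
          ∑ t ∈ Finset.range n, (if g t then 1 else 0) * 2 ^ t := by ring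
    rw [e, tb_decomp _ _ n s hlt]
    rcases lt_trichotomy s n with h | h | h
    · rw [if_pos h, ih]
      simp [h, Nat.lt_succ_of_lt h]
    · subst h
      rw [if_neg (lt_irrefl _), Nat.sub_self]
      cases hgn : g s <;> simp [hgn]
    · rw [if_neg (by omega)]
      have h1 : s - n ≠ 0 := by omega
      have h2 : Nat.testBit (if g n then 1 else 0) (s - n) = false := by
        split
        · exact Nat.testBit_eq_false_of_lt (Nat.one_lt_two_pow h1)
        · simp
      rw [h2]
      simp [show ¬ s < n + 1 by omega]

lemma downward_closed_iff {ℓ : ℕ} (s : Finset (Fin ℓ))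
    (hdc : ∀ j j' : Fin ℓ, j' ≤ j → j ∈ s → j' ∈ s) (j : Fin ℓ) :
    j ∈ s ↔ (j : ℕ) < s.card := by
  constructor
  · intro hj
    have hsub : Finset.Iic j ⊆ s := fun j' hj' => hdc j j' (Finset.mem_Iic.mp hj') hj
    have h2 := Finset.card_le_card hsub
    rw [Fin.card_Iic] at h2
    omega
  · intro hj
    by_contra hjs
    have hsub : s ⊆ Finset.Iio j := by
      intro j' hj'
      rw [Finset.mem_Iio]
      by_contra hge
      exact hjs (hdc j' j (not_lt.mp hge) hj')
    have h2 := Finset.card_le_card hsub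
    rw [Fin.card_Iio] at h2
    omega

/-- The bit of the curve value at position `t`, read off from the grid point. -/
def gbits (d ℓ : ℕ) (γ : Fin d × Fin ℓ ≃ Fin (d * ℓ)) (p : Fin d → ℕ) : ℕ → Bool :=
  fun t => if h : t < d * ℓ then
    Nat.testBit (p (γ.symm ⟨t, h⟩).1) ((γ.symm ⟨t, h⟩).2 : ℕ) else false

lemma F_eq_sumBits (d ℓ : ℕ) (γ : Fin d × Fin ℓ ≃ Fin (d * ℓ)) (p : Fin d → ℕ) :
    (∑ i : Fin d, ∑ j : Fin ℓ,
        (if Nat.testBit (p i) j then 1 else 0) * 2 ^ (γ (i, j) : ℕ))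
      = ∑ t ∈ Finset.range (d * ℓ), (if gbits d ℓ γ p t then 1 else 0) * 2 ^ t := by
  have key : ∀ x : Fin d × Fin ℓ,
      (if Nat.testBit (p x.1) (x.2 : ℕ) then 1 else 0) * 2 ^ (γ x : ℕ)
        = (if gbits d ℓ γ p ((γ x : ℕ)) then 1 else 0) * 2 ^ ((γ x : ℕ)) := by
    intro x
    have hg : gbits d ℓ γ p ((γ x : ℕ)) = Nat.testBit (p x.1) (x.2 : ℕ) := by
      unfold gbits
      rw [dif_pos (γ x).isLt]
      simp
    rw [hg]
  calc ∑ i : Fin d, ∑ j : Fin ℓ,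
        (if Nat.testBit (p i) j then 1 else 0) * 2 ^ (γ (i, j) : ℕ)
      = ∑ x : Fin d × Fin ℓ,
          (if Nat.testBit (p x.1) (x.2 : ℕ) then 1 else 0) * 2 ^ (γ x : ℕ) :=
        (Fintype.sum_prod_type (fun x : Fin d × Fin ℓ =>
          (if Nat.testBit (p x.1) (x.2 : ℕ) then 1 else 0) * 2 ^ (γ x : ℕ))).symm
    _ = ∑ x : Fin d × Fin ℓ,
          (if gbits d ℓ γ p ((γ x : ℕ)) then 1 else 0) * 2 ^ ((γ x : ℕ)) :=
        Finset.sum_congr rfl (fun x _ => key x)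
    _ = ∑ t : Fin (d * ℓ), (if gbits d ℓ γ p (t : ℕ) then 1 else 0) * 2 ^ (t : ℕ) :=
        Equiv.sum_comp γ (fun t : Fin (d * ℓ) =>
          (if gbits d ℓ γ p (t : ℕ) then 1 else 0) * 2 ^ (t : ℕ))
    _ = ∑ t ∈ Finset.range (d * ℓ), (if gbits d ℓ γ p t then 1 else 0) * 2 ^ t :=
        Fin.sum_univ_eq_sum_range (fun t => (if gbits d ℓ γ p t then 1 else 0) * 2 ^ t)
          (d * ℓ)

end BMCAux

open BMCAux in
/-- General-dimension form of Equations 7 and 9 of the paper: the number of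
directed edges of a range query equals the sum, over all dimensions `b` and
bit positions `i`, of the rise-pattern count `R(b, i)` times the product of
the matching drop-pattern counts `D(i', k(b, i, i'))` over the remaining
dimensions `i'`. -/
theorem bmc_edge_count_rise_drop (d ℓ : ℕ) (hd : 1 ≤ d) (hl : 1 ≤ ℓ)
    (γ : Fin d × Fin ℓ ≃ Fin (d * ℓ))
    (hγ : ∀ i : Fin d, StrictMono fun j : Fin ℓ => γ (i, j))
    (F : (Fin d → ℕ) → ℕ)
    (hF : ∀ p, F p = ∑ i : Fin d, ∑ j : Fin ℓ,
        (if Nat.testBit (p i) j then 1 else 0) * 2 ^ (γ (i, j) : ℕ))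
    (ps pe : Fin d → ℕ) (hps : ∀ i, ps i < 2 ^ ℓ) (hpe : ∀ i, pe i < 2 ^ ℓ)
    (hse : ∀ i, ps i ≤ pe i)
    (Q : Finset (Fin d → ℕ)) (hQ : Q = Finset.Icc ps pe)
    (R : Fin d → Fin ℓ → ℕ)
    (hR : ∀ b i, R b i = {c : ℕ | ps b ≤ c ∧ c + 1 ≤ pe b ∧
        c % 2 ^ ((i : ℕ) + 1) = 2 ^ (i : ℕ) - 1}.ncard)
    (D : Fin d → ℕ → ℕ)
    (hD : ∀ i' k, D i' k = {c : ℕ | c ≤ pe i' ∧ c % 2 ^ k = 2 ^ k - 1 ∧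
        ps i' ≤ c - (2 ^ k - 1)}.ncard)
    (kf : Fin d → Fin ℓ → Fin d → ℕ)
    (hk : ∀ b i i', kf b i i' =
        (Finset.univ.filter fun j : Fin ℓ => γ (i', j) < γ (b, i)).card) :
    ((Q ×ˢ Q).filter (fun pq => F pq.2 = F pq.1 + 1)).card =
      ∑ b : Fin d, ∑ i : Fin ℓ,
        R b i * ∏ i' ∈ Finset.univ.erase b, D i' (kf b i i') := by
  classical
  -- bits of the curve value
  have hFbit : ∀ p s, Nat.testBit (F p) s = (decide (s < d * ℓ) && gbits d ℓ γ p s) := by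
    intro p s
    rw [hF, F_eq_sumBits, testBit_sumBits]
  have hFb : ∀ p (x : Fin d × Fin ℓ),
      Nat.testBit (F p) ((γ x : ℕ)) = Nat.testBit (p x.1) (x.2 : ℕ) := by
    intro p x
    rw [hFbit]
    have h1 : ((γ x : ℕ)) < d * ℓ := (γ x).isLt
    simp [gbits, h1]
  have hFb' : ∀ p (i'' : Fin d) (j : ℕ) (hj : j < ℓ),
      Nat.testBit (F p) ((γ (i'', ⟨j, hj⟩) : ℕ)) = Nat.testBit (p i'') j :=
    fun p i'' j hj => hFb p (i'', ⟨j, hj⟩)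
  have hFlt : ∀ p, F p < 2 ^ (d * ℓ) := by
    intro p
    rw [hF, F_eq_sumBits]
    exact sumBits_lt _ _
  have hQmem : ∀ p, p ∈ Q ↔ ∀ i'' : Fin d, ps i'' ≤ p i'' ∧ p i'' ≤ pe i'' := by
    intro p
    rw [hQ, Finset.mem_Icc]
    constructor
    · rintro ⟨h1, h2⟩ i''
      exact ⟨h1 i'', h2 i''⟩
    · intro h
      exact ⟨fun i'' => (h i'').1, fun i'' => (h i'').2⟩
  have hQgrid : ∀ p, p ∈ Q → ∀ i'' : Fin d, p i'' < 2 ^ ℓ := fun p hp i'' =>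
    lt_of_le_of_lt ((hQmem p).mp hp i'').2 (hpe i'')
  have hFinj : ∀ p q, (∀ i'' : Fin d, p i'' < 2 ^ ℓ) → (∀ i'' : Fin d, q i'' < 2 ^ ℓ) →
      F p = F q → p = q := by
    intro p q hp hq hpq
    funext i''
    apply Nat.eq_of_testBit_eq
    intro j
    rcases lt_or_ge j ℓ with hj | hj
    · have e1 := hFb' p i'' j hj
      have e2 := hFb' q i'' j hj
      rw [hpq] at e1
      exact e1.symm.trans e2
    · rw [Nat.testBit_eq_false_of_lt
        (lt_of_lt_of_le (hp i'') (Nat.pow_le_pow_right (by norm_num) hj)),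
        Nat.testBit_eq_false_of_lt
        (lt_of_lt_of_le (hq i'') (Nat.pow_le_pow_right (by norm_num) hj))]
  have hkl : ∀ b i i', kf b i i' ≤ ℓ := by
    intro b i i'
    rw [hk]
    calc (Finset.univ.filter fun j : Fin ℓ => γ (i', j) < γ (b, i)).card
        ≤ (Finset.univ : Finset (Fin ℓ)).card := Finset.card_filter_le _ _
      _ = ℓ := by simp
  have hkchar : ∀ (b : Fin d) (i : Fin ℓ) (i' : Fin d) (j : Fin ℓ),
      (γ (i', j) < γ (b, i) ↔ (j : ℕ) < kf b i i') := by
    intro b i i' j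
    rw [hk]
    have hdc : ∀ j1 j2 : Fin ℓ, j2 ≤ j1 →
        j1 ∈ Finset.univ.filter (fun j : Fin ℓ => γ (i', j) < γ (b, i)) →
        j2 ∈ Finset.univ.filter (fun j : Fin ℓ => γ (i', j) < γ (b, i)) := by
      intro j1 j2 hle hj1
      simp only [Finset.mem_filter, Finset.mem_univ, true_and] at hj1 ⊢
      exact lt_of_le_of_lt ((hγ i').monotone hle) hj1
    have h := downward_closed_iff _ hdc j
    simp only [Finset.mem_filter, Finset.mem_univ, true_and] at h
    exact h
  have hbchar : ∀ (b : Fin d) (i j : Fin ℓ), (γ (b, j) < γ (b, i) ↔ j < i) :=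
    fun b i j => (hγ b).lt_iff_lt
  -- Core forward direction
  have coreFwd : ∀ (b : Fin d) (i : Fin ℓ) (p q : Fin d → ℕ),
      (∀ i'' : Fin d, p i'' < 2 ^ ℓ) → (∀ i'' : Fin d, q i'' < 2 ^ ℓ) →
      p b % 2 ^ ((i : ℕ) + 1) = 2 ^ (i : ℕ) - 1 →
      (∀ i', i' ≠ b → p i' % 2 ^ kf b i i' = 2 ^ kf b i i' - 1) →
      q b = p b + 1 →
      (∀ i', i' ≠ b → q i' = p i' - (2 ^ kf b i i' - 1)) →
      F q = F p + 1 ∧ F p % 2 ^ ((γ (b, i) : ℕ) + 1) = 2 ^ (γ (b, i) : ℕ) - 1 := by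
    intro b i p q hp hq hrise hdrop hqb hqd
    have hPm : F p % 2 ^ ((γ (b, i) : ℕ) + 1) = 2 ^ (γ (b, i) : ℕ) - 1 := by
      rw [mod_rise_iff]
      constructor
      · intro t ht
        have htN : t < d * ℓ := lt_trans ht (γ (b, i)).isLt
        obtain ⟨⟨i'', j⟩, hgx⟩ : ∃ x : Fin d × Fin ℓ, γ x = ⟨t, htN⟩ :=
          ⟨γ.symm ⟨t, htN⟩, γ.apply_symm_apply _⟩
        have hvs : (γ (i'', j) : ℕ) = t := by rw [hgx]
        have hbit := hFb p (i'', j)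
        rw [hvs] at hbit
        rw [hbit]
        have hltf : γ (i'', j) < γ (b, i) := by
          rw [Fin.lt_def, hvs]
          exact ht
        by_cases hxb : i'' = b
        · subst hxb
          have hji : j < i := (hbchar i'' i j).mp hltf
          exact ((mod_rise_iff _ _).mp hrise).1 _ (Fin.lt_def.mp hji)
        · have hjk : (j : ℕ) < kf b i i'' := (hkchar b i i'' j).mp hltf
          exact (mod_two_pow_eq_iff_bits _ _).mp (hdrop i'' hxb) _ hjk
      · have hbit := hFb p (b, i)
        rw [hbit]
        exact ((mod_rise_iff _ _).mp hrise).2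
    refine ⟨?_, hPm⟩
    apply Nat.eq_of_testBit_eq
    intro s
    rw [succ_bits hPm s]
    rcases lt_or_ge s (d * ℓ) with hs | hs
    · obtain ⟨⟨i'', j⟩, hgx⟩ : ∃ x : Fin d × Fin ℓ, γ x = ⟨s, hs⟩ :=
        ⟨γ.symm ⟨s, hs⟩, γ.apply_symm_apply _⟩
      have hvs : (γ (i'', j) : ℕ) = s := by rw [hgx]
      have hbitq := hFb q (i'', j)
      rw [hvs] at hbitq
      rw [hbitq]
      have hbitp := hFb p (i'', j)
      rw [hvs] at hbitp
      by_cases hxb : i'' = b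
      · subst hxb
        rw [hqb, succ_bits hrise ((j : ℕ))]
        have hlt : s < (γ (i'', i) : ℕ) ↔ (j : ℕ) < (i : ℕ) := by
          rw [← hvs, ← Fin.lt_def, hbchar i'' i j, Fin.lt_def]
        have heq : s = (γ (i'', i) : ℕ) ↔ (j : ℕ) = (i : ℕ) := by
          constructor
          · intro h
            have h3 : γ (i'', j) = γ (i'', i) := Fin.val_injective (hvs.trans h)
            have h4 := γ.injective h3
            rw [Prod.mk.injEq] at h4
            exact congrArg Fin.val h4.2
          · intro h
            have h4 : j = i := Fin.val_injective h
            rw [← hvs, h4]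
        simp only [hlt, heq, hbitp]
      · rw [hqd i'' hxb, drop_bits (hdrop i'' hxb) ((j : ℕ))]
        have hlt : s < (γ (b, i) : ℕ) ↔ (j : ℕ) < kf b i i'' := by
          rw [← hvs, ← Fin.lt_def, hkchar b i i'' j]
        have hne0 : s ≠ (γ (b, i) : ℕ) := by
          intro hcon
          apply hxb
          have : γ (i'', j) = γ (b, i) := Fin.val_injective (hvs.trans hcon)
          have h2 := γ.injective this
          exact (Prod.mk.injEq _ _ _ _).mp h2 |>.1
        simp only [hlt, hne0, hbitp, if_false]
    · have h1 : Nat.testBit (F q) s = false :=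
        Nat.testBit_eq_false_of_lt
          (lt_of_lt_of_le (hFlt q) (Nat.pow_le_pow_right (by norm_num) hs))
      have h2 : Nat.testBit (F p) s = false :=
        Nat.testBit_eq_false_of_lt
          (lt_of_lt_of_le (hFlt p) (Nat.pow_le_pow_right (by norm_num) hs))
      have ht0 : (γ (b, i) : ℕ) < d * ℓ := (γ (b, i)).isLt
      rw [if_neg (by omega), if_neg (by omega), h1, h2]
  -- Core backward direction
  have coreBwd : ∀ (b : Fin d) (i : Fin ℓ) (p q : Fin d → ℕ),
      (∀ i'' : Fin d, p i'' < 2 ^ ℓ) → (∀ i'' : Fin d, q i'' < 2 ^ ℓ) →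
      F q = F p + 1 →
      F p % 2 ^ ((γ (b, i) : ℕ) + 1) = 2 ^ (γ (b, i) : ℕ) - 1 →
      (p b % 2 ^ ((i : ℕ) + 1) = 2 ^ (i : ℕ) - 1) ∧
      (∀ i', i' ≠ b → p i' % 2 ^ kf b i i' = 2 ^ kf b i i' - 1) ∧
      q b = p b + 1 ∧
      (∀ i', i' ≠ b → q i' = p i' - (2 ^ kf b i i' - 1)) := by
    intro b i p q hp hq hq1 hPm
    obtain ⟨hlow, hbit0⟩ := (mod_rise_iff _ _).mp hPm
    have hrise : p b % 2 ^ ((i : ℕ) + 1) = 2 ^ (i : ℕ) - 1 := by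
      rw [mod_rise_iff]
      constructor
      · intro j hj
        have hjl : j < ℓ := lt_trans hj i.isLt
        rw [← hFb' p b j hjl]
        apply hlow
        have h5 : (⟨j, hjl⟩ : Fin ℓ) < i := by
          rw [Fin.lt_def]
          exact hj
        exact Fin.lt_def.mp ((hbchar b i ⟨j, hjl⟩).mpr h5)
      · rw [← hFb p (b, i)]
        exact hbit0
    have hdropm : ∀ i', i' ≠ b → p i' % 2 ^ kf b i i' = 2 ^ kf b i i' - 1 := by
      intro i' hne
      rw [mod_two_pow_eq_iff_bits]
      intro j hj
      have hjl : j < ℓ := lt_of_lt_of_le hj (hkl b i i')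
      rw [← hFb' p i' j hjl]
      apply hlow
      exact Fin.lt_def.mp ((hkchar b i i' ⟨j, hjl⟩).mpr hj)
    have hqb : q b = p b + 1 := by
      apply Nat.eq_of_testBit_eq
      intro s
      rw [succ_bits hrise s]
      rcases lt_or_ge s ℓ with hs | hs
      · rw [← hFb' q b s hs, hq1, succ_bits hPm]
        have hlt : (γ (b, ⟨s, hs⟩) : ℕ) < (γ (b, i) : ℕ) ↔ s < (i : ℕ) := by
          rw [← Fin.lt_def, hbchar b i ⟨s, hs⟩, Fin.lt_def]
        have heq : (γ (b, ⟨s, hs⟩) : ℕ) = (γ (b, i) : ℕ) ↔ s = (i : ℕ) := by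
          constructor
          · intro h
            have h4 := γ.injective (Fin.val_injective h)
            rw [Prod.mk.injEq] at h4
            exact congrArg Fin.val h4.2
          · intro h
            have h4 : (⟨s, hs⟩ : Fin ℓ) = i := Fin.val_injective h
            rw [h4]
        simp only [hlt, heq, hFb' p b s hs]
      · have h1 : Nat.testBit (q b) s = false :=
          Nat.testBit_eq_false_of_lt
            (lt_of_lt_of_le (hq b) (Nat.pow_le_pow_right (by norm_num) hs))
        have h2 : Nat.testBit (p b) s = false :=
          Nat.testBit_eq_false_of_lt
            (lt_of_lt_of_le (hp b) (Nat.pow_le_pow_right (by norm_num) hs))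
        have hil : (i : ℕ) < ℓ := i.isLt
        rw [if_neg (by omega), if_neg (by omega), h1, h2]
    have hqd : ∀ i', i' ≠ b → q i' = p i' - (2 ^ kf b i i' - 1) := by
      intro i' hne
      apply Nat.eq_of_testBit_eq
      intro s
      rw [drop_bits (hdropm i' hne) s]
      rcases lt_or_ge s ℓ with hs | hs
      · rw [← hFb' q i' s hs, hq1, succ_bits hPm]
        have hlt : (γ (i', ⟨s, hs⟩) : ℕ) < (γ (b, i) : ℕ) ↔ s < kf b i i' := by
          rw [← Fin.lt_def, hkchar b i i' ⟨s, hs⟩]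
        have hne0 : (γ (i', ⟨s, hs⟩) : ℕ) ≠ (γ (b, i) : ℕ) := by
          intro hcon
          apply hne
          have h3 : γ (i', ⟨s, hs⟩) = γ (b, i) := Fin.val_injective hcon
          have h2 := γ.injective h3
          exact (Prod.mk.injEq _ _ _ _).mp h2 |>.1
        simp only [hlt, hne0, hFb' p i' s hs, if_false]
      · have h1 : Nat.testBit (q i') s = false :=
          Nat.testBit_eq_false_of_lt
            (lt_of_lt_of_le (hq i') (Nat.pow_le_pow_right (by norm_num) hs))
        have h2 : Nat.testBit (p i') s = false :=
          Nat.testBit_eq_false_of_lt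
            (lt_of_lt_of_le (hp i') (Nat.pow_le_pow_right (by norm_num) hs))
        have hkil := hkl b i i'
        rw [if_neg (by omega), h1, h2]
    exact ⟨hrise, hdropm, hqb, hqd⟩
  -- finite versions of the rise/drop count sets
  set Rfin : Fin d → Fin ℓ → Finset ℕ := fun b i => (Finset.range (pe b + 1)).filter
      (fun c => ps b ≤ c ∧ c + 1 ≤ pe b ∧
        c % 2 ^ ((i : ℕ) + 1) = 2 ^ (i : ℕ) - 1) with hRfin
  set Dfin : Fin d → ℕ → Finset ℕ := fun i' k => (Finset.range (pe i' + 1)).filter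
      (fun c => c ≤ pe i' ∧ c % 2 ^ k = 2 ^ k - 1 ∧ ps i' ≤ c - (2 ^ k - 1)) with hDfin
  have hRcard : ∀ b i, R b i = (Rfin b i).card := by
    intro b i
    rw [hR, ← Set.ncard_coe_finset]
    congr 1
    ext c
    simp only [Set.mem_setOf_eq, Finset.coe_filter, Finset.mem_range, hRfin]
    constructor
    · rintro ⟨h1, h2, h3⟩
      exact ⟨by omega, h1, h2, h3⟩
    · rintro ⟨_, h⟩
      exact h
  have hDcard : ∀ i' k, D i' k = (Dfin i' k).card := by
    intro i' k
    rw [hD, ← Set.ncard_coe_finset]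
    congr 1
    ext c
    simp only [Set.mem_setOf_eq, Finset.coe_filter, Finset.mem_range, hDfin]
    constructor
    · rintro ⟨h1, h2, h3⟩
      exact ⟨by omega, h1, h2, h3⟩
    · rintro ⟨_, h⟩
      exact h
  -- existence and uniqueness of the carry position
  have hPuniq : ∀ (m : ℕ) (bi bi' : Fin d × Fin ℓ),
      m % 2 ^ ((γ bi : ℕ) + 1) = 2 ^ (γ bi : ℕ) - 1 →
      m % 2 ^ ((γ bi' : ℕ) + 1) = 2 ^ (γ bi' : ℕ) - 1 → bi = bi' := by
    intro m bi bi' h1 h2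
    obtain ⟨hl1, hb1⟩ := (mod_rise_iff _ _).mp h1
    obtain ⟨hl2, hb2⟩ := (mod_rise_iff _ _).mp h2
    have hveq : (γ bi : ℕ) = (γ bi' : ℕ) := by
      rcases lt_trichotomy ((γ bi : ℕ)) ((γ bi' : ℕ)) with h | h | h
      · rw [hl2 _ h] at hb1
        exact absurd hb1 (by simp)
      · exact h
      · rw [hl1 _ h] at hb2
        exact absurd hb2 (by simp)
    exact γ.injective (Fin.val_injective hveq)
  have hPex : ∀ pq : (Fin d → ℕ) × (Fin d → ℕ),
      pq ∈ (Q ×ˢ Q).filter (fun pq => F pq.2 = F pq.1 + 1) →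
      ∃ bi : Fin d × Fin ℓ,
        F pq.1 % 2 ^ ((γ bi : ℕ) + 1) = 2 ^ (γ bi : ℕ) - 1 := by
    intro pq hpq
    rw [Finset.mem_filter] at hpq
    obtain ⟨_, hfe⟩ := hpq
    have hex : ∃ t, Nat.testBit (F pq.1) t = false :=
      ⟨d * ℓ, Nat.testBit_eq_false_of_lt (hFlt _)⟩
    set t0 := Nat.find hex with ht0def
    have ht0 : Nat.testBit (F pq.1) t0 = false := Nat.find_spec hex
    have hmin : ∀ t, t < t0 → Nat.testBit (F pq.1) t = true := by
      intro t ht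
      have h3 := Nat.find_min hex ht
      simpa using h3
    have ht0N : t0 < d * ℓ := by
      by_contra hge
      push_neg at hge
      have hall : F pq.1 % 2 ^ (d * ℓ) = 2 ^ (d * ℓ) - 1 :=
        (mod_two_pow_eq_iff_bits _ _).mpr (fun j hj => hmin j (by omega))
      have hmlt := hFlt pq.1
      have hmod := Nat.mod_eq_of_lt hmlt
      have h1 : F pq.1 = 2 ^ (d * ℓ) - 1 := by omega
      have h2 := hFlt pq.2
      rw [hfe] at h2
      have h3 : (1:ℕ) ≤ 2 ^ (d * ℓ) := Nat.one_le_two_pow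
      omega
    refine ⟨γ.symm ⟨t0, ht0N⟩, ?_⟩
    rw [γ.apply_symm_apply]
    exact (mod_rise_iff _ _).mpr ⟨hmin, ht0⟩
  -- fiberwise decomposition
  set f : ((Fin d → ℕ) × (Fin d → ℕ)) → Fin d × Fin ℓ := fun pq =>
    if h : ∃ bi : Fin d × Fin ℓ,
        F pq.1 % 2 ^ ((γ bi : ℕ) + 1) = 2 ^ (γ bi : ℕ) - 1
    then h.choose else (⟨0, hd⟩, ⟨0, hl⟩) with hf
  rw [Finset.card_eq_sum_card_fiberwise
    (f := f) (t := (Finset.univ : Finset (Fin d × Fin ℓ)))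
    (fun pq _ => Finset.mem_univ _)]
  rw [Fintype.sum_prod_type]
  apply Finset.sum_congr rfl
  intro b _
  apply Finset.sum_congr rfl
  intro i _
  have hfilter : ((Q ×ˢ Q).filter (fun pq => F pq.2 = F pq.1 + 1)).filter
      (fun pq => f pq = (b, i))
      = ((Q ×ˢ Q).filter (fun pq => F pq.2 = F pq.1 + 1)).filter
        (fun pq => F pq.1 % 2 ^ ((γ (b, i) : ℕ) + 1) = 2 ^ ((γ (b, i) : ℕ)) - 1) := by
    apply Finset.filter_congr
    intro pq hpq
    have hex := hPex pq hpq
    rw [hf]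
    simp only
    rw [dif_pos hex]
    constructor
    · intro h
      rw [← h]
      exact hex.choose_spec
    · intro h
      exact hPuniq _ _ _ hex.choose_spec h
  rw [hfilter]
  -- count the cell by a bijection onto a product of coordinate sets
  have hcell : (((Q ×ˢ Q).filter (fun pq => F pq.2 = F pq.1 + 1)).filter
        (fun pq => F pq.1 % 2 ^ ((γ (b, i) : ℕ) + 1) = 2 ^ ((γ (b, i) : ℕ)) - 1)).card
      = (Fintype.piFinset (fun i' : Fin d =>
          if i' = b then Rfin b i else Dfin i' (kf b i i'))).card := by
    apply Finset.card_bij (fun pq _ => pq.1)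
    · intro pq hpq
      rw [Finset.mem_filter] at hpq
      obtain ⟨hpqS, hPm⟩ := hpq
      rw [Finset.mem_filter, Finset.mem_product] at hpqS
      obtain ⟨⟨hpQ, hqQ⟩, hfe⟩ := hpqS
      obtain ⟨hrise, hdropm, hqb, hqd⟩ :=
        coreBwd b i pq.1 pq.2 (hQgrid _ hpQ) (hQgrid _ hqQ) hfe hPm
      rw [Fintype.mem_piFinset]
      intro i'
      have h1 := (hQmem _).mp hpQ i'
      have h2 := (hQmem _).mp hqQ i'
      by_cases hne : i' = b
      · subst hne
        rw [if_pos rfl, hRfin]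
        simp only [Finset.mem_filter, Finset.mem_range]
        exact ⟨by omega, h1.1, by omega, hrise⟩
      · rw [if_neg hne, hDfin]
        simp only [Finset.mem_filter, Finset.mem_range]
        have hqi := hqd i' hne
        refine ⟨by omega, h1.2, hdropm i' hne, ?_⟩
        rw [← hqi]
        exact h2.1
    · intro a1 ha1 a2 ha2 heq
      rw [Finset.mem_filter, Finset.mem_filter, Finset.mem_product] at ha1 ha2
      obtain ⟨⟨⟨hp1, hq1⟩, hfe1⟩, _⟩ := ha1
      obtain ⟨⟨⟨hp2, hq2⟩, hfe2⟩, _⟩ := ha2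
      have h2 : a1.2 = a2.2 := by
        apply hFinj _ _ (hQgrid _ hq1) (hQgrid _ hq2)
        rw [hfe1, hfe2, heq]
      exact Prod.ext heq h2
    · intro p hp
      rw [Fintype.mem_piFinset] at hp
      have hpb := hp b
      rw [if_pos rfl, hRfin] at hpb
      simp only [Finset.mem_filter, Finset.mem_range] at hpb
      obtain ⟨_, hpsb, hpe1, hrise⟩ := hpb
      have hpd : ∀ i', i' ≠ b → (p i' ≤ pe i' ∧
          p i' % 2 ^ kf b i i' = 2 ^ kf b i i' - 1 ∧
          ps i' ≤ p i' - (2 ^ kf b i i' - 1)) := by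
        intro i' hne
        have h3 := hp i'
        rw [if_neg hne, hDfin] at h3
        simp only [Finset.mem_filter, Finset.mem_range] at h3
        exact h3.2
      set q : Fin d → ℕ := fun i' =>
        if i' = b then p b + 1 else p i' - (2 ^ kf b i i' - 1) with hqdef
      have hqb : q b = p b + 1 := by rw [hqdef]; simp
      have hqd : ∀ i', i' ≠ b → q i' = p i' - (2 ^ kf b i i' - 1) := by
        intro i' hne
        rw [hqdef]
        simp [hne]
      have hpgrid : ∀ i'' : Fin d, p i'' < 2 ^ ℓ := by
        intro i''
        by_cases h : i'' = b
        · subst h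
          have := hpe i''
          omega
        · exact lt_of_le_of_lt (hpd i'' h).1 (hpe i'')
      have hqgrid : ∀ i'' : Fin d, q i'' < 2 ^ ℓ := by
        intro i''
        by_cases h : i'' = b
        · subst h
          rw [hqb]
          have := hpe i''
          omega
        · rw [hqd i'' h]
          have := hpgrid i''
          omega
      obtain ⟨hFq1, hPm⟩ := coreFwd b i p q hpgrid hqgrid hrise
        (fun i' h => (hpd i' h).2.1) hqb hqd
      refine ⟨(p, q), ?_, rfl⟩
      rw [Finset.mem_filter, Finset.mem_filter, Finset.mem_product]
      refine ⟨⟨⟨?_, ?_⟩, hFq1⟩, hPm⟩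
      · rw [hQmem]
        intro i''
        show ps i'' ≤ p i'' ∧ p i'' ≤ pe i''
        by_cases h : i'' = b
        · subst h
          exact ⟨hpsb, by omega⟩
        · refine ⟨le_trans (hpd i'' h).2.2 (Nat.sub_le _ _), (hpd i'' h).1⟩
      · rw [hQmem]
        intro i''
        show ps i'' ≤ q i'' ∧ q i'' ≤ pe i''
        by_cases h : i'' = b
        · subst h
          rw [hqb]
          exact ⟨by omega, by omega⟩
        · rw [hqd i'' h]
          exact ⟨(hpd i'' h).2.2, le_trans (Nat.sub_le _ _) (hpd i'' h).1⟩
  rw [hcell, Fintype.card_piFinset,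
    ← Finset.mul_prod_erase Finset.univ _ (Finset.mem_univ b)]
  congr 1
  · rw [if_pos rfl, hRcard]
  · apply Finset.prod_congr rfl
    intro i' hi'
    rw [if_neg (Finset.ne_of_mem_erase hi'), hDcard]
end
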